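/- arXiv:1512.04403 — 2 statements merged into one kernel-verified Lean document; each statement's English description precedes it below -/
import Mathlib

section
/- Assume the project is PCL-indexable, i.e., conditions (PCLI1), (PCLI2) and (PCLI3) hold. Then for every initial distribution p on ℝ with ∫ w dp < ∞ and every state x, the functions z ↦ F(p,z) and z ↦ f(x,z) have bounded variation on ℝ. -/
open MeasureTheory ProbabilityTheory Filter Topology Set

noncomputable section

/-- A restless bandit project: the model data (discount factor `β`, passive/active
Markov transition kernels `κ false`/`κ true`, reward `r` and resource consumption `c`),
Assumption 1 (the weighted sup-norm conditions for weight `w` and constants `M`, `γ`),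
together with the threshold-policy performance metrics `F`, `G` (for `z`-policies,
active iff `x > z`), `Fm`, `Gm` (for `z⁻`-policies, active iff `x ≥ z`), and the
optimal value function `V lam` of the `lam`-price problem, each of which is the
(unique) `w`-bounded measurable solution of its fixed-point equation. -/
structure Bandit where
  β : ℝ
  κ : Bool → Kernel ℝ ℝ
  r : ℝ → Bool → ℝ
  c : ℝ → Bool → ℝ
  w : ℝ → ℝ
  M : ℝ
  γ : ℝ
  F : ℝ → EReal → ℝ
  G : ℝ → EReal → ℝ
  Fm : ℝ → EReal → ℝ
  Gm : ℝ → EReal → ℝ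
  V : ℝ → ℝ → ℝ
  hβ0 : 0 ≤ β
  hβ1 : β < 1
  hκ : ∀ a, IsMarkovKernel (κ a)
  hr_cont : ∀ a, Continuous fun x => r x a
  hc_cont : ∀ a, Continuous fun x => c x a
  hc0 : ∀ x, 0 ≤ c x false
  hc01 : ∀ x, c x false < c x true
  hw_meas : Measurable w
  hw_one : ∀ x, 1 ≤ w x
  hM : 0 < M
  hβγ : β ≤ γ
  hγ1 : γ < 1
  hr_bd : ∀ x a, |r x a| ≤ M * w x
  hc_bd : ∀ x a, c x a ≤ M * w x
  hw_int : ∀ a x, Integrable w (κ a x)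
  hw_drift : ∀ a x, β * ∫ y, w y ∂(κ a x) ≤ γ * w x
  hF_meas : ∀ z, Measurable fun x => F x z
  hG_meas : ∀ z, Measurable fun x => G x z
  hFm_meas : ∀ z, Measurable fun x => Fm x z
  hGm_meas : ∀ z, Measurable fun x => Gm x z
  hV_meas : ∀ lam, Measurable (V lam)
  hF_bdd : ∀ z, ∃ C, ∀ x, |F x z| ≤ C * w x
  hG_bdd : ∀ z, ∃ C, ∀ x, |G x z| ≤ C * w x
  hFm_bdd : ∀ z, ∃ C, ∀ x, |Fm x z| ≤ C * w x
  hGm_bdd : ∀ z, ∃ C, ∀ x, |Gm x z| ≤ C * w x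
  hV_bdd : ∀ lam, ∃ C, ∀ x, |V lam x| ≤ C * w x
  hF_eq : ∀ x z, F x z =
    r x (decide (z < (x : EReal))) +
      β * ∫ y, F y z ∂(κ (decide (z < (x : EReal))) x)
  hG_eq : ∀ x z, G x z =
    c x (decide (z < (x : EReal))) +
      β * ∫ y, G y z ∂(κ (decide (z < (x : EReal))) x)
  hFm_eq : ∀ x z, Fm x z =
    r x (decide (z ≤ (x : EReal))) +
      β * ∫ y, Fm y z ∂(κ (decide (z ≤ (x : EReal))) x)
  hGm_eq : ∀ x z, Gm x z =
    c x (decide (z ≤ (x : EReal))) +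
      β * ∫ y, Gm y z ∂(κ (decide (z ≤ (x : EReal))) x)
  hV_eq : ∀ lam x, V lam x =
    max (r x false - lam * c x false + β * ∫ y, V lam y ∂(κ false x))
        (r x true - lam * c x true + β * ∫ y, V lam y ∂(κ true x))

/-- `ν` is the Lebesgue–Stieltjes measure of the (bounded nonincreasing
right-continuous) function `h`: `ν(z₁,z₂] = h z₁ - h z₂`. -/
def IsLSMeasureOfAnti (h : ℝ → ℝ) (ν : Measure ℝ) : Prop :=
  ∀ z₁ z₂ : ℝ, z₁ ≤ z₂ → ν (Set.Ioc z₁ z₂) = ENNReal.ofReal (h z₁ - h z₂)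

/-- `ν` is the Lebesgue–Stieltjes measure of the (bounded nondecreasing
right-continuous) function `h`: `ν(z₁,z₂] = h z₂ - h z₁`. -/
def IsLSMeasureOfMono (h : ℝ → ℝ) (ν : Measure ℝ) : Prop :=
  ∀ z₁ z₂ : ℝ, z₁ ≤ z₂ → ν (Set.Ioc z₁ z₂) = ENNReal.ofReal (h z₂ - h z₁)

/-- The real interval `(z₁, z₂] ⊆ ℝ` with extended-real endpoints. -/
def iocR (z₁ z₂ : EReal) : Set ℝ := {y : ℝ | z₁ < (y : EReal) ∧ (y : EReal) ≤ z₂}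

/-- `t`-step distribution of the Markov chain with kernel `κ` and initial law `p`. -/
def kerIter (κ : Kernel ℝ ℝ) : ℕ → Measure ℝ → Measure ℝ
  | 0, p => p
  | (t + 1), p => (kerIter κ t p).bind fun x => κ x

namespace Bandit

variable (P : Bandit)

/-- Marginal reward metric `f(x,z)` of the `z`-policy. -/
def f (x : ℝ) (z : EReal) : ℝ :=
  (P.r x true - P.r x false) +
    P.β * ((∫ y, P.F y z ∂(P.κ true x)) - ∫ y, P.F y z ∂(P.κ false x))

/-- Marginal resource metric `g(x,z)` of the `z`-policy. -/
def g (x : ℝ) (z : EReal) : ℝ :=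
  (P.c x true - P.c x false) +
    P.β * ((∫ y, P.G y z ∂(P.κ true x)) - ∫ y, P.G y z ∂(P.κ false x))

/-- Marginal reward metric `f(x,z⁻)` of the `z⁻`-policy. -/
def fm (x : ℝ) (z : EReal) : ℝ :=
  (P.r x true - P.r x false) +
    P.β * ((∫ y, P.Fm y z ∂(P.κ true x)) - ∫ y, P.Fm y z ∂(P.κ false x))

/-- Marginal resource metric `g(x,z⁻)` of the `z⁻`-policy. -/
def gm (x : ℝ) (z : EReal) : ℝ :=
  (P.c x true - P.c x false) +
    P.β * ((∫ y, P.Gm y z ∂(P.κ true x)) - ∫ y, P.Gm y z ∂(P.κ false x))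

/-- Marginal productivity metric `m(x,z) = f(x,z)/g(x,z)`. -/
def m (x : ℝ) (z : EReal) : ℝ := P.f x z / P.g x z

/-- Marginal productivity metric `m(x,z⁻) = f(x,z⁻)/g(x,z⁻)`. -/
def mm (x : ℝ) (z : EReal) : ℝ := P.fm x z / P.gm x z

/-- The marginal productivity (MP) index `m*(x) = m(x,x)`. -/
def mStar (x : ℝ) : ℝ := P.m x (x : EReal)

/-- The active action is `P_lam`-optimal at `x`. -/
def ActOpt (lam x : ℝ) : Prop :=
  P.r x false - lam * P.c x false + P.β * ∫ y, P.V lam y ∂(P.κ false x) ≤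
    P.r x true - lam * P.c x true + P.β * ∫ y, P.V lam y ∂(P.κ true x)

/-- The passive action is `P_lam`-optimal at `x`. -/
def PassOpt (lam x : ℝ) : Prop :=
  P.r x true - lam * P.c x true + P.β * ∫ y, P.V lam y ∂(P.κ true x) ≤
    P.r x false - lam * P.c x false + P.β * ∫ y, P.V lam y ∂(P.κ false x)

/-- The project is indexable with index `ν`. -/
def Indexable (ν : ℝ → ℝ) : Prop :=
  ∀ lam x, (P.ActOpt lam x ↔ lam ≤ ν x) ∧ (P.PassOpt lam x ↔ ν x ≤ lam)

/-- The `z`-policy is `P_lam`-optimal. -/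
def ZPolicyOpt (z : EReal) (lam : ℝ) : Prop :=
  ∀ x, P.F x z - lam * P.G x z = P.V lam x

/-- The `z⁻`-policy is `P_lam`-optimal. -/
def ZmPolicyOpt (z : EReal) (lam : ℝ) : Prop :=
  ∀ x, P.Fm x z - lam * P.Gm x z = P.V lam x

/-- The project is strongly threshold-indexable with index `ν`. -/
def StronglyThresholdIndexable (ν : ℝ → ℝ) : Prop :=
  P.Indexable ν ∧
    ∀ lam : ℝ, ∃ z : EReal, P.ZPolicyOpt z lam ∧ P.ZmPolicyOpt z lam

/-- PCL-indexability condition (PCLI1). -/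
def PCLI1 : Prop := ∀ (x : ℝ) (z : EReal), 0 < P.g x z

/-- PCL-indexability condition (PCLI2). -/
def PCLI2 : Prop :=
  Monotone P.mStar ∧ Continuous P.mStar ∧ BddBelow (Set.range P.mStar)

/-- PCL-indexability condition (PCLI3). -/
def PCLI3 : Prop :=
  ∀ x : ℝ, ∀ ν : Measure ℝ, IsLSMeasureOfAnti (fun z : ℝ => P.G x z) ν →
    ∀ z₁ z₂ : ℝ, z₁ < z₂ →
      P.F x z₂ - P.F x z₁ = -∫ z in Set.Ioc z₁ z₂, P.mStar z ∂ν

/-- The project is PCL-indexable. -/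
def PCLIndexable : Prop := P.PCLI1 ∧ P.PCLI2 ∧ P.PCLI3

/-- Reward metric with initial distribution `p`. -/
def Fp (p : Measure ℝ) (z : EReal) : ℝ := ∫ x, P.F x z ∂p

/-- Resource metric with initial distribution `p`. -/
def Gp (p : Measure ℝ) (z : EReal) : ℝ := ∫ x, P.G x z ∂p

/-- `z⁻`-policy reward metric with initial distribution `p`. -/
def Fmp (p : Measure ℝ) (z : EReal) : ℝ := ∫ x, P.Fm x z ∂p

/-- `z⁻`-policy resource metric with initial distribution `p`. -/
def Gmp (p : Measure ℝ) (z : EReal) : ℝ := ∫ x, P.Gm x z ∂p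

/-- An admissible initial distribution: a probability measure with `∫ w dp < ∞`. -/
def IsInitDist (p : Measure ℝ) : Prop :=
  IsProbabilityMeasure p ∧ Integrable P.w p

/-- The transition kernel of the `z`-policy (active iff `x > z`). -/
def thrKer (z : EReal) : Kernel ℝ ℝ :=
  haveI : DecidablePred (· ∈ {x : ℝ | z < (x : EReal)}) := Classical.decPred _
  Kernel.piecewise
    (show MeasurableSet {x : ℝ | z < (x : EReal)} from
      measurable_coe_real_ereal measurableSet_Ioi)
    (P.κ true) (P.κ false)

/-- The transition kernel of the `z⁻`-policy (active iff `x ≥ z`). -/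
def thrKerM (z : EReal) : Kernel ℝ ℝ :=
  haveI : DecidablePred (· ∈ {x : ℝ | z ≤ (x : EReal)}) := Classical.decPred _
  Kernel.piecewise
    (show MeasurableSet {x : ℝ | z ≤ (x : EReal)} from
      measurable_coe_real_ereal measurableSet_Ici)
    (P.κ true) (P.κ false)

/-- The (discounted) state occupation measure `μ_p^z` of the `z`-policy. -/
def occ (z : EReal) (p : Measure ℝ) : Measure ℝ :=
  Measure.sum fun t : ℕ => ENNReal.ofReal (P.β ^ t) • kerIter (P.thrKer z) t p

/-- The (discounted) state occupation measure `μ_p^{z⁻}` of the `z⁻`-policy. -/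
def occM (z : EReal) (p : Measure ℝ) : Measure ℝ :=
  Measure.sum fun t : ℕ => ENNReal.ofReal (P.β ^ t) • kerIter (P.thrKerM z) t p

end Bandit

/-- Finite-horizon reward metric `F_k(x,z)` (value iteration). -/
def Bandit.Fk (P : Bandit) : ℕ → ℝ → EReal → ℝ
  | 0, x, z => P.r x (decide (z < (x : EReal)))
  | (k + 1), x, z =>
      P.r x (decide (z < (x : EReal))) +
        P.β * ∫ y, Bandit.Fk P k y z ∂(P.κ (decide (z < (x : EReal))) x)

/-- Finite-horizon resource metric `G_k(x,z)` (value iteration). -/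
def Bandit.Gk (P : Bandit) : ℕ → ℝ → EReal → ℝ
  | 0, x, z => P.c x (decide (z < (x : EReal)))
  | (k + 1), x, z =>
      P.c x (decide (z < (x : EReal))) +
        P.β * ∫ y, Bandit.Gk P k y z ∂(P.κ (decide (z < (x : EReal))) x)

/-- Finite-horizon marginal reward metric `f_k(x,z)`. -/
def Bandit.fk (P : Bandit) : ℕ → ℝ → EReal → ℝ
  | 0, x, _ => P.r x true - P.r x false
  | (k + 1), x, z =>
      (P.r x true - P.r x false) +
        P.β * ((∫ y, P.Fk k y z ∂(P.κ true x)) - ∫ y, P.Fk k y z ∂(P.κ false x))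

/-- Finite-horizon marginal resource metric `g_k(x,z)`. -/
def Bandit.gk (P : Bandit) : ℕ → ℝ → EReal → ℝ
  | 0, x, _ => P.c x true - P.c x false
  | (k + 1), x, z =>
      (P.c x true - P.c x false) +
        P.β * ((∫ y, P.Gk k y z ∂(P.κ true x)) - ∫ y, P.Gk k y z ∂(P.κ false x))

namespace Bandit

variable (P : Bandit)

/-- Finite-horizon MP metric `m_k(x,z)`. -/
def mk' (k : ℕ) (x : ℝ) (z : EReal) : ℝ := P.fk k x z / P.gk k x z

/-- Finite-horizon MP index `m*_k(x)`. -/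
def mkStar (k : ℕ) (x : ℝ) : ℝ := P.mk' k x (x : EReal)

/-- `g̲(x,z) = inf_k g_k(x,z)`. -/
def gbar (x : ℝ) (z : EReal) : ℝ := ⨅ k : ℕ, P.gk k x z

end Bandit

namespace PCLAux

variable (P : Bandit)

lemma w_pos (x : ℝ) : 0 < P.w x := lt_of_lt_of_le one_pos (P.hw_one x)

lemma one_sub_gamma_pos : 0 < 1 - P.γ := by linarith [P.hγ1]

lemma CG_nonneg : 0 ≤ P.M / (1 - P.γ) := le_of_lt (div_pos P.hM (one_sub_gamma_pos P))

lemma integrable_wbound {v : ℝ → ℝ} {C : ℝ} (hv : Measurable v)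
    (hb : ∀ y, |v y| ≤ C * P.w y) {μ : Measure ℝ} (hw : Integrable P.w μ) :
    Integrable v μ :=
  (hw.const_mul C).mono' hv.aestronglyMeasurable
    (ae_of_all _ fun y => by simpa [Real.norm_eq_abs] using hb y)

lemma nonneg_principle (v e : ℝ → ℝ) (a : ℝ → Bool) (C : ℝ)
    (hv : Measurable v) (hb : ∀ x, |v x| ≤ C * P.w x)
    (he : ∀ x, 0 ≤ e x)
    (heq : ∀ x, v x = e x + P.β * ∫ y, v y ∂(P.κ (a x) x)) :
    ∀ x, 0 ≤ v x := by
  have hw_pos := w_pos P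
  have hbdd : BddBelow (Set.range fun x => v x / P.w x) := by
    refine ⟨-C, ?_⟩
    rintro t ⟨x, rfl⟩
    rw [le_div_iff₀ (hw_pos x)]
    have := (abs_le.1 (hb x)).1
    linarith
  set I := ⨅ y, v y / P.w y with hIdef
  have hIle : ∀ x, I ≤ v x / P.w x := fun x => ciInf_le hbdd x
  have hvI : ∀ x, I * P.w x ≤ v x := fun x => by
    have h1 := hIle x
    rwa [le_div_iff₀ (hw_pos x)] at h1
  have hInn : 0 ≤ I := by
    by_contra hneg
    push_neg at hneg
    have key : ∀ x, P.γ * I ≤ v x / P.w x := by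
      intro x
      have hint_v : Integrable v (P.κ (a x) x) := integrable_wbound P hv hb (P.hw_int _ _)
      have h1 : I * ∫ y, P.w y ∂(P.κ (a x) x) ≤ ∫ y, v y ∂(P.κ (a x) x) := by
        rw [← integral_const_mul]
        exact integral_mono ((P.hw_int _ _).const_mul I) hint_v fun y => hvI y
      have h2 : I * (P.γ * P.w x) ≤ I * (P.β * ∫ y, P.w y ∂(P.κ (a x) x)) :=
        mul_le_mul_of_nonpos_left (P.hw_drift (a x) x) hneg.le
      have h3 : P.β * (I * ∫ y, P.w y ∂(P.κ (a x) x)) ≤ P.β * ∫ y, v y ∂(P.κ (a x) x) :=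
        mul_le_mul_of_nonneg_left h1 P.hβ0
      rw [le_div_iff₀ (hw_pos x)]
      have h4 := heq x
      have h5 := he x
      nlinarith
    have hle : P.γ * I ≤ I := le_ciInf key
    nlinarith [mul_pos (sub_pos.2 P.hγ1) (neg_pos.2 hneg)]
  intro x
  have := hvI x
  nlinarith [mul_nonneg hInn (hw_pos x).le]

lemma zero_principle (v : ℝ → ℝ) (a : ℝ → Bool) (C : ℝ)
    (hv : Measurable v) (hb : ∀ x, |v x| ≤ C * P.w x)
    (heq : ∀ x, v x = P.β * ∫ y, v y ∂(P.κ (a x) x)) :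
    ∀ x, v x = 0 := by
  have h1 := nonneg_principle P v (fun _ => 0) a C hv hb (fun _ => le_rfl)
      (fun x => by rw [zero_add]; exact heq x)
  have h2 := nonneg_principle P (fun x => -v x) (fun _ => 0) a C hv.neg
      (fun x => by rw [abs_neg]; exact hb x) (fun _ => le_rfl)
      (fun x => by
        show -v x = 0 + P.β * ∫ y, -v y ∂(P.κ (a x) x)
        rw [zero_add, integral_neg, mul_neg, heq x])
  intro x
  have ha := h1 x
  have hbb := h2 x
  simp only [neg_nonneg] at hbb
  linarith

lemma bound_principle (v e : ℝ → ℝ) (a : ℝ → Bool) (C : ℝ)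
    (hv : Measurable v) (hb : ∀ x, |v x| ≤ C * P.w x)
    (he : ∀ x, |e x| ≤ P.M * P.w x)
    (heq : ∀ x, v x = e x + P.β * ∫ y, v y ∂(P.κ (a x) x)) :
    ∀ x, |v x| ≤ (P.M / (1 - P.γ)) * P.w x := by
  have hw_pos := w_pos P
  have hbdd : BddAbove (Set.range fun x => |v x| / P.w x) := by
    refine ⟨C, ?_⟩
    rintro t ⟨x, rfl⟩
    rw [div_le_iff₀ (hw_pos x)]
    exact hb x
  set S := ⨆ y, |v y| / P.w y with hSdef
  have hSle : ∀ x, |v x| / P.w x ≤ S := fun x => le_ciSup hbdd x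
  have hvS : ∀ x, |v x| ≤ S * P.w x := fun x => by
    have h1 := hSle x
    rwa [div_le_iff₀ (hw_pos x)] at h1
  have hS0 : 0 ≤ S := le_trans (div_nonneg (abs_nonneg _) (hw_pos 0).le) (hSle 0)
  have hstep : ∀ x, |v x| ≤ (P.M + P.γ * S) * P.w x := by
    intro x
    have hint_v : Integrable v (P.κ (a x) x) := integrable_wbound P hv hb (P.hw_int _ _)
    have h1 : |∫ y, v y ∂(P.κ (a x) x)| ≤ ∫ y, |v y| ∂(P.κ (a x) x) := by
      simpa [Real.norm_eq_abs] using norm_integral_le_integral_norm (μ := P.κ (a x) x) v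
    have h2 : ∫ y, |v y| ∂(P.κ (a x) x) ≤ S * ∫ y, P.w y ∂(P.κ (a x) x) := by
      rw [← integral_const_mul]
      exact integral_mono hint_v.abs ((P.hw_int _ _).const_mul S) fun y => hvS y
    have h3 : P.β * ∫ y, P.w y ∂(P.κ (a x) x) ≤ P.γ * P.w x := P.hw_drift _ _
    have h6 : |v x| ≤ |e x| + P.β * |∫ y, v y ∂(P.κ (a x) x)| := by
      rw [heq x]
      refine (abs_add_le _ _).trans ?_
      rw [abs_mul, abs_of_nonneg P.hβ0]
    have h7 := he x
    nlinarith [mul_le_mul_of_nonneg_left h1 P.hβ0, mul_le_mul_of_nonneg_left h2 P.hβ0,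
      mul_le_mul_of_nonneg_left h3 hS0]
  have hSb : S ≤ P.M + P.γ * S := by
    refine ciSup_le fun x => ?_
    rw [div_le_iff₀ (hw_pos x)]
    exact hstep x
  have hSfin : S ≤ P.M / (1 - P.γ) := by
    rw [le_div_iff₀ (one_sub_gamma_pos P)]
    nlinarith
  intro x
  calc |v x| ≤ S * P.w x := hvS x
    _ ≤ (P.M / (1 - P.γ)) * P.w x := mul_le_mul_of_nonneg_right hSfin (hw_pos x).le

lemma G_bound : ∀ (z : EReal) (x : ℝ), |P.G x z| ≤ (P.M / (1 - P.γ)) * P.w x := by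
  intro z
  obtain ⟨C, hC⟩ := P.hG_bdd z
  refine bound_principle P _ (fun x => P.c x (decide (z < (x : EReal))))
    (fun x => decide (z < (x : EReal))) C (P.hG_meas z) hC ?_ (fun x => P.hG_eq x z)
  intro x
  have h0 : 0 ≤ P.c x (decide (z < (x : EReal))) := by
    cases hd : decide (z < (x : EReal)) with
    | false => exact P.hc0 x
    | true => exact (P.hc0 x).trans (P.hc01 x).le
  rw [abs_of_nonneg h0]
  exact P.hc_bd x _

lemma F_bound : ∀ (z : EReal) (x : ℝ), |P.F x z| ≤ (P.M / (1 - P.γ)) * P.w x := by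
  intro z
  obtain ⟨C, hC⟩ := P.hF_bdd z
  exact bound_principle P _ (fun x => P.r x (decide (z < (x : EReal))))
    (fun x => decide (z < (x : EReal))) C (P.hF_meas z) hC (fun x => P.hr_bd x _)
    (fun x => P.hF_eq x z)

lemma G_int (z : EReal) (b : Bool) (x : ℝ) : Integrable (fun y => P.G y z) (P.κ b x) :=
  integrable_wbound P (P.hG_meas z) (fun y => G_bound P z y) (P.hw_int b x)

lemma decide_coe (t x : ℝ) : decide ((t : EReal) < (x : EReal)) = decide (t < x) :=
  decide_eq_decide.2 EReal.coe_lt_coe_iff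

lemma G_eq_real (x t : ℝ) : P.G x ↑t =
    P.c x (decide (t < x)) + P.β * ∫ y, P.G y ↑t ∂(P.κ (decide (t < x)) x) := by
  have h := P.hG_eq x ↑t
  rwa [decide_coe] at h

lemma G_antitone (h1 : P.PCLI1) {z₁ z₂ : ℝ} (hz : z₁ ≤ z₂) (x : ℝ) :
    P.G x ↑z₂ ≤ P.G x ↑z₁ := by
  have hGb := G_bound P
  have hnn := nonneg_principle P (fun x => P.G x ↑z₁ - P.G x ↑z₂)
      (fun x => (P.G x ↑z₁ - P.G x ↑z₂) -
        P.β * ∫ y, (P.G y ↑z₁ - P.G y ↑z₂) ∂(P.κ (decide (z₁ < x)) x))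
      (fun x => decide (z₁ < x)) (2 * (P.M / (1 - P.γ)))
      ((P.hG_meas _).sub (P.hG_meas _))
      (fun x => by
        have ha := hGb ↑z₁ x
        have hbb := hGb ↑z₂ x
        calc |P.G x ↑z₁ - P.G x ↑z₂| ≤ |P.G x ↑z₁| + |P.G x ↑z₂| := abs_sub _ _
          _ ≤ 2 * (P.M / (1 - P.γ)) * P.w x := by linarith)
      ?_ (fun x => by ring)
  · exact sub_nonneg.1 (hnn x)
  intro x
  show 0 ≤ P.G x ↑z₁ - P.G x ↑z₂ -
    P.β * ∫ y, (P.G y ↑z₁ - P.G y ↑z₂) ∂(P.κ (decide (z₁ < x)) x)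
  have hsub : ∀ b : Bool, ∫ y, (P.G y ↑z₁ - P.G y ↑z₂) ∂(P.κ b x)
      = (∫ y, P.G y ↑z₁ ∂(P.κ b x)) - ∫ y, P.G y ↑z₂ ∂(P.κ b x) := fun b =>
    integral_sub (G_int P ↑z₁ b x) (G_int P ↑z₂ b x)
  have e1 := G_eq_real P x z₁
  have e2 := G_eq_real P x z₂
  rcases le_or_gt x z₁ with hx1 | hx1
  · have hd1 : decide (z₁ < x) = false := decide_eq_false (not_lt.2 hx1)
    have hd2 : decide (z₂ < x) = false := decide_eq_false (not_lt.2 (hx1.trans hz))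
    rw [hd1] at e1 ⊢
    rw [hd2] at e2
    rw [hsub, mul_sub]
    linarith
  · have hd1 : decide (z₁ < x) = true := decide_eq_true hx1
    rw [hd1] at e1 ⊢
    rcases le_or_gt x z₂ with hx2 | hx2
    · have hd2 : decide (z₂ < x) = false := decide_eq_false (not_lt.2 hx2)
      rw [hd2] at e2
      have hg := h1 x ↑z₂
      simp only [Bandit.g] at hg
      rw [hsub, mul_sub]
      rw [mul_sub] at hg
      linarith
    · have hd2 : decide (z₂ < x) = true := decide_eq_true hx2
      rw [hd2] at e2
      rw [hsub, mul_sub]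
      linarith

lemma G_rc (h1 : P.PCLI1) (a : ℝ) :
    ∀ x : ℝ, P.G x ↑a = ⨆ n : ℕ, P.G x ↑(a + 1 / ((n : ℝ) + 1)) := by
  have hGb := G_bound P
  set s : ℕ → ℝ := fun n => a + 1 / ((n : ℝ) + 1) with hsdef
  have hs_rfl : ∀ n, s n = a + 1 / ((n : ℝ) + 1) := fun n => rfl
  have hspos : ∀ n, a < s n := fun n => by
    rw [hs_rfl]
    have : (0 : ℝ) < 1 / ((n : ℝ) + 1) := by positivity
    linarith
  have hs_anti : ∀ {n m : ℕ}, n ≤ m → s m ≤ s n := by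
    intro n m hnm
    have h1' : ((n : ℝ) + 1) ≤ ((m : ℝ) + 1) := by
      have : (n : ℝ) ≤ (m : ℝ) := Nat.cast_le.2 hnm
      linarith
    rw [hs_rfl, hs_rfl]
    have := one_div_le_one_div_of_le (by positivity : (0:ℝ) < (n : ℝ) + 1) h1'
    linarith
  have hmono : ∀ x, Monotone fun n => P.G x ↑(s n) := fun x n m hnm =>
    G_antitone P h1 (hs_anti hnm) x
  have hbddA : ∀ x, BddAbove (Set.range fun n => P.G x ↑(s n)) := fun x =>
    ⟨(P.M / (1 - P.γ)) * P.w x, by rintro t ⟨n, rfl⟩; exact (abs_le.1 (hGb _ x)).2⟩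
  set L : ℝ → ℝ := fun x => ⨆ n, P.G x ↑(s n) with hLdef
  have htend : ∀ x, Tendsto (fun n => P.G x ↑(s n)) atTop (𝓝 (L x)) := fun x =>
    tendsto_atTop_ciSup (hmono x) (hbddA x)
  have hLmeas : Measurable L :=
    measurable_of_tendsto_metrizable (fun n => P.hG_meas _) (tendsto_pi_nhds.2 htend)
  have hLbd : ∀ x, |L x| ≤ (P.M / (1 - P.γ)) * P.w x := by
    intro x
    rw [abs_le]
    exact ⟨le_trans (abs_le.1 (hGb (↑(s 0)) x)).1 (le_ciSup (hbddA x) 0),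
      ciSup_le fun n => (abs_le.1 (hGb _ x)).2⟩
  have hLeq : ∀ x, L x = P.c x (decide (a < x)) + P.β * ∫ y, L y ∂(P.κ (decide (a < x)) x) := by
    intro x
    have hev : ∀ᶠ n in atTop, decide (s n < x) = decide (a < x) := by
      rcases lt_or_ge a x with hax | hax
      · obtain ⟨N, hN⟩ := exists_nat_one_div_lt (sub_pos.2 hax)
        filter_upwards [eventually_ge_atTop N] with n hn
        have h2 : s n ≤ s N := hs_anti hn
        have h3 : s N < x := by rw [hs_rfl]; linarith
        rw [decide_eq_true (lt_of_le_of_lt h2 h3), decide_eq_true hax]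
      · filter_upwards with n
        rw [decide_eq_false (not_lt.2 (hax.trans (hspos n).le)),
          decide_eq_false (not_lt.2 hax)]
    have heqn : ∀ᶠ n in atTop,
        P.c x (decide (a < x)) + P.β * ∫ y, P.G y ↑(s n) ∂(P.κ (decide (a < x)) x)
          = P.G x ↑(s n) := by
      filter_upwards [hev] with n hn
      have h4 := G_eq_real P x (s n)
      rw [hn] at h4
      exact h4.symm
    have hint_tend : Tendsto (fun n => ∫ y, P.G y ↑(s n) ∂(P.κ (decide (a < x)) x)) atTop
        (𝓝 (∫ y, L y ∂(P.κ (decide (a < x)) x))) := by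
      refine tendsto_integral_of_dominated_convergence (fun y => (P.M / (1 - P.γ)) * P.w y)
        (fun n => (P.hG_meas _).aestronglyMeasurable)
        ((P.hw_int _ x).const_mul _)
        (fun n => ae_of_all _ fun y => by simpa [Real.norm_eq_abs] using hGb (↑(s n)) y)
        (ae_of_all _ fun y => htend y)
    have h2 : Tendsto (fun n => P.c x (decide (a < x)) +
        P.β * ∫ y, P.G y ↑(s n) ∂(P.κ (decide (a < x)) x)) atTop
        (𝓝 (P.c x (decide (a < x)) + P.β * ∫ y, L y ∂(P.κ (decide (a < x)) x))) :=
      tendsto_const_nhds.add (hint_tend.const_mul P.β)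
    exact tendsto_nhds_unique (htend x) (h2.congr' heqn)
  have hveq : ∀ x, (L x - P.G x ↑a) = P.β * ∫ y, (L y - P.G y ↑a) ∂(P.κ (decide (a < x)) x) := by
    intro x
    have h4 := G_eq_real P x a
    have h5 := hLeq x
    rw [integral_sub (integrable_wbound P hLmeas hLbd (P.hw_int _ _)) (G_int P ↑a _ _),
      mul_sub]
    linarith
  have hzero := zero_principle P (fun x => L x - P.G x ↑a) (fun x => decide (a < x))
      (2 * (P.M / (1 - P.γ))) (hLmeas.sub (P.hG_meas _))
      (fun x => by
        have ha2 := hLbd x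
        have hbb := hGb (↑a : EReal) x
        calc |L x - P.G x ↑a| ≤ |L x| + |P.G x ↑a| := abs_sub _ _
          _ ≤ 2 * (P.M / (1 - P.γ)) * P.w x := by linarith)
      hveq
  intro x
  have hz : L x - P.G x ↑a = 0 := hzero x
  have hLx : L x = ⨆ n : ℕ, P.G x ↑(a + 1 / ((n : ℝ) + 1)) := rfl
  linarith

lemma exists_LS (h1 : P.PCLI1) (x : ℝ) :
    ∃ ν : Measure ℝ, IsLSMeasureOfAnti (fun z : ℝ => P.G x ↑z) ν := by
  have hmono : Monotone fun z : ℝ => -P.G x ↑z := fun z₁ z₂ hz =>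
    neg_le_neg (G_antitone P h1 hz x)
  have hrc : ∀ a : ℝ, ContinuousWithinAt (fun z : ℝ => -P.G x ↑z) (Ici a) a := by
    intro a
    rw [← continuousWithinAt_Ioi_iff_Ici]
    have htend := hmono.tendsto_nhdsGT a
    have hglb : IsGLB ((fun z : ℝ => -P.G x ↑z) '' Ioi a) (-P.G x ↑a) := by
      constructor
      · rintro t ⟨z, hz, rfl⟩
        exact neg_le_neg (G_antitone P h1 (le_of_lt hz) x)
      · intro c hc
        rw [le_neg]
        rw [G_rc P h1 a x]
        refine ciSup_le fun n => ?_
        have hmem : a + 1 / ((n : ℝ) + 1) ∈ Ioi a := by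
          have : (0 : ℝ) < 1 / ((n : ℝ) + 1) := by positivity
          simp only [mem_Ioi]
          linarith
        have := hc ⟨_, hmem, rfl⟩
        linarith
    have hne : ((fun z : ℝ => -P.G x ↑z) '' Ioi a).Nonempty :=
      ⟨_, mem_image_of_mem _ (mem_Ioi.2 (lt_add_one a))⟩
    rw [hglb.csInf_eq hne] at htend
    exact htend
  refine ⟨(StieltjesFunction.mk (fun z : ℝ => -P.G x ↑z) hmono hrc).measure,
    fun z₁ z₂ hz => ?_⟩
  rw [StieltjesFunction.measure_Ioc]
  congr 1
  show -P.G x ↑z₂ - -P.G x ↑z₁ = P.G x ↑z₁ - P.G x ↑z₂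
  ring

lemma F_partition_bound (h : P.PCLIndexable) :
    ∃ K : ℝ, 0 ≤ K ∧ ∀ (x : ℝ) (u : ℕ → ℝ), Monotone u → ∀ n : ℕ,
      ∑ i ∈ Finset.range n, |P.F x ↑(u (i + 1)) - P.F x ↑(u i)| ≤ K * P.w x := by
  obtain ⟨h1, h2, h3⟩ := h
  obtain ⟨hm_mono, hm_cont, hm_bdd⟩ := h2
  obtain ⟨b, hb⟩ := hm_bdd
  have hb' : ∀ y, b ≤ P.mStar y := fun y => hb ⟨y, rfl⟩
  have hCG := CG_nonneg P
  refine ⟨2 * (P.M / (1 - P.γ)) + 4 * |b| * (P.M / (1 - P.γ)),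
    by nlinarith [abs_nonneg b], ?_⟩
  intro x u hu n
  have hwx := w_pos P x
  have h2CGw : (0:ℝ) ≤ 2 * (P.M / (1 - P.γ)) * P.w x := by nlinarith
  obtain ⟨ν, hls⟩ := exists_LS P h1 x
  have hkey := h3 x ν hls
  have hkey' : ∀ z₁ z₂ : ℝ, z₁ < z₂ →
      ∫ z in Ioc z₁ z₂, P.mStar z ∂ν = P.F x ↑z₁ - P.F x ↑z₂ := by
    intro z₁ z₂ hz
    have := hkey z₁ z₂ hz
    linarith
  have hFb := F_bound P
  have hGb := G_bound P
  have hIoc : ∀ z₁ z₂ : ℝ, z₁ ≤ z₂ →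
      ν (Ioc z₁ z₂) ≤ ENNReal.ofReal (2 * (P.M / (1 - P.γ)) * P.w x) := by
    intro z₁ z₂ hz
    rw [hls z₁ z₂ hz]
    apply ENNReal.ofReal_le_ofReal
    have h4 := abs_le.1 (hGb ↑z₁ x)
    have h5 := abs_le.1 (hGb ↑z₂ x)
    linarith
  have hJdir : Directed (· ⊆ ·) (fun n : ℕ => Ioc (-(n : ℝ) - 1) ((n : ℝ) + 1)) := by
    intro m k
    have hm : (m : ℝ) ≤ ((max m k : ℕ) : ℝ) := Nat.cast_le.2 (le_max_left m k)
    have hk : (k : ℝ) ≤ ((max m k : ℕ) : ℝ) := Nat.cast_le.2 (le_max_right m k)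
    exact ⟨max m k, Ioc_subset_Ioc (by linarith) (by linarith),
      Ioc_subset_Ioc (by linarith) (by linarith)⟩
  have hJunion : (⋃ n : ℕ, Ioc (-(n : ℝ) - 1) ((n : ℝ) + 1)) = univ := by
    apply eq_univ_of_forall
    intro y
    obtain ⟨k, hk⟩ := exists_nat_gt |y|
    exact mem_iUnion.2 ⟨k, ⟨by linarith [(abs_lt.1 hk).1], by linarith [(abs_lt.1 hk).2]⟩⟩
  have hlon : ∀ k : ℕ, (-(k : ℝ) - 1) ≤ ((k : ℝ) + 1) := fun k => by
    have : (0:ℝ) ≤ (k : ℝ) := Nat.cast_nonneg k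
    linarith
  have hν_univ : ν univ ≤ ENNReal.ofReal (2 * (P.M / (1 - P.γ)) * P.w x) := by
    rw [← hJunion, hJdir.measure_iUnion]
    exact iSup_le fun k => hIoc _ _ (hlon k)
  haveI hνfin : IsFiniteMeasure ν := ⟨lt_of_le_of_lt hν_univ ENNReal.ofReal_lt_top⟩
  have hmlI : ∀ z₁ z₂ : ℝ, IntegrableOn P.mStar (Ioc z₁ z₂) ν := by
    intro z₁ z₂
    refine Measure.integrableOn_of_bounded (measure_ne_top ν _)
      hm_cont.measurable.aestronglyMeasurable
      (M := max |P.mStar z₁| |P.mStar z₂|) ?_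
    filter_upwards [ae_restrict_mem measurableSet_Ioc] with z hz
    rw [Real.norm_eq_abs, abs_le]
    constructor
    · have := hm_mono hz.1.le
      linarith [neg_abs_le (P.mStar z₁), le_max_left |P.mStar z₁| |P.mStar z₂|]
    · have := hm_mono hz.2
      linarith [le_abs_self (P.mStar z₂), le_max_right |P.mStar z₁| |P.mStar z₂|]
  set D := ν.withDensity (fun z => ENNReal.ofReal (P.mStar z - b)) with hDdef
  have habs_pt : ∀ z : ℝ, |P.mStar z| ≤ (P.mStar z - b) + |b| := by
    intro z
    rw [abs_le]
    constructor
    · linarith [hb' z, neg_abs_le b]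
    · linarith [le_abs_self b]
  have hDIoc : ∀ k : ℕ, D (Ioc (-(k : ℝ) - 1) ((k : ℝ) + 1)) ≤
      ENNReal.ofReal (2 * (P.M / (1 - P.γ)) * P.w x +
        |b| * (2 * (P.M / (1 - P.γ)) * P.w x)) := by
    intro k
    have hlo : (-(k : ℝ) - 1) < ((k : ℝ) + 1) := by
      have : (0:ℝ) ≤ (k : ℝ) := Nat.cast_nonneg k
      linarith
    rw [hDdef, withDensity_apply _ measurableSet_Ioc]
    have hconst : IntegrableOn (fun _ : ℝ => b) (Ioc (-(k : ℝ) - 1) ((k : ℝ) + 1)) ν :=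
      integrableOn_const (measure_ne_top ν _)
    have hintOn : IntegrableOn (fun z => P.mStar z - b) (Ioc (-(k : ℝ) - 1) ((k : ℝ) + 1)) ν :=
      (hmlI _ _).sub hconst
    rw [← ofReal_integral_eq_lintegral_ofReal hintOn
      (ae_of_all _ fun z => sub_nonneg.2 (hb' z))]
    apply ENNReal.ofReal_le_ofReal
    have hsplit : ∫ z in Ioc (-(k : ℝ) - 1) ((k : ℝ) + 1), (P.mStar z - b) ∂ν
        = (∫ z in Ioc (-(k : ℝ) - 1) ((k : ℝ) + 1), P.mStar z ∂ν)
          - (ν (Ioc (-(k : ℝ) - 1) ((k : ℝ) + 1))).toReal * b := by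
      rw [integral_sub (hmlI _ _) hconst, setIntegral_const, smul_eq_mul, measureReal_def]
    rw [hsplit, hkey' _ _ hlo]
    have hFb1 := abs_le.1 (hFb ↑(-(k : ℝ) - 1) x)
    have hFb2 := abs_le.1 (hFb ↑((k : ℝ) + 1) x)
    have htR : (ν (Ioc (-(k : ℝ) - 1) ((k : ℝ) + 1))).toReal
        ≤ 2 * (P.M / (1 - P.γ)) * P.w x :=
      ENNReal.toReal_le_of_le_ofReal h2CGw (hIoc _ _ hlo.le)
    have htR0 : 0 ≤ (ν (Ioc (-(k : ℝ) - 1) ((k : ℝ) + 1))).toReal := ENNReal.toReal_nonneg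
    nlinarith [neg_abs_le b, le_abs_self b, abs_nonneg b]
  have hD_univ : ∫⁻ z, ENNReal.ofReal (P.mStar z - b) ∂ν ≤
      ENNReal.ofReal (2 * (P.M / (1 - P.γ)) * P.w x +
        |b| * (2 * (P.M / (1 - P.γ)) * P.w x)) := by
    have hDu : D univ = ∫⁻ z, ENNReal.ofReal (P.mStar z - b) ∂ν := by
      rw [hDdef, withDensity_apply _ MeasurableSet.univ, Measure.restrict_univ]
    rw [← hDu, ← hJunion, hJdir.measure_iUnion]
    exact iSup_le hDIoc
  have hm_meas : Measurable P.mStar := hm_cont.measurable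
  have hm_int : Integrable P.mStar ν := by
    refine ⟨hm_cont.aestronglyMeasurable, ?_⟩
    rw [hasFiniteIntegral_iff_norm]
    calc ∫⁻ z, ENNReal.ofReal ‖P.mStar z‖ ∂ν
        ≤ ∫⁻ z, (ENNReal.ofReal (P.mStar z - b) + ENNReal.ofReal |b|) ∂ν := by
          refine lintegral_mono fun z => ?_
          rw [Real.norm_eq_abs, ← ENNReal.ofReal_add (sub_nonneg.2 (hb' z)) (abs_nonneg b)]
          exact ENNReal.ofReal_le_ofReal (habs_pt z)
      _ = (∫⁻ z, ENNReal.ofReal (P.mStar z - b) ∂ν) + ENNReal.ofReal |b| * ν univ := by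
          rw [lintegral_add_right _ measurable_const, lintegral_const]
      _ < ⊤ := ENNReal.add_lt_top.2
          ⟨lt_of_le_of_lt hD_univ ENNReal.ofReal_lt_top,
            ENNReal.mul_lt_top ENNReal.ofReal_lt_top (measure_lt_top ν _)⟩
  have hVx : ∫ z, |P.mStar z| ∂ν ≤
      (2 * (P.M / (1 - P.γ)) + 4 * |b| * (P.M / (1 - P.γ))) * P.w x := by
    have hRHS0 : (0:ℝ) ≤ 2 * (P.M / (1 - P.γ)) * P.w x +
        |b| * (2 * (P.M / (1 - P.γ)) * P.w x) + |b| * (2 * (P.M / (1 - P.γ)) * P.w x) := by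
      nlinarith [abs_nonneg b]
    have hle : ENNReal.ofReal (∫ z, |P.mStar z| ∂ν) ≤
        ENNReal.ofReal (2 * (P.M / (1 - P.γ)) * P.w x +
          |b| * (2 * (P.M / (1 - P.γ)) * P.w x) + |b| * (2 * (P.M / (1 - P.γ)) * P.w x)) := by
      rw [ofReal_integral_eq_lintegral_ofReal hm_int.abs (ae_of_all _ fun z => abs_nonneg _)]
      calc ∫⁻ z, ENNReal.ofReal |P.mStar z| ∂ν
          ≤ ∫⁻ z, (ENNReal.ofReal (P.mStar z - b) + ENNReal.ofReal |b|) ∂ν := by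
            refine lintegral_mono fun z => ?_
            rw [← ENNReal.ofReal_add (sub_nonneg.2 (hb' z)) (abs_nonneg b)]
            exact ENNReal.ofReal_le_ofReal (habs_pt z)
        _ = (∫⁻ z, ENNReal.ofReal (P.mStar z - b) ∂ν) + ENNReal.ofReal |b| * ν univ := by
            rw [lintegral_add_right _ measurable_const, lintegral_const]
        _ ≤ ENNReal.ofReal (2 * (P.M / (1 - P.γ)) * P.w x +
              |b| * (2 * (P.M / (1 - P.γ)) * P.w x))
            + ENNReal.ofReal |b| * ENNReal.ofReal (2 * (P.M / (1 - P.γ)) * P.w x) :=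
            add_le_add hD_univ (by gcongr)
        _ = _ := by
            rw [← ENNReal.ofReal_mul (abs_nonneg b), ← ENNReal.ofReal_add (by nlinarith [abs_nonneg b]) (by nlinarith [abs_nonneg b])]
    have h6 := (ENNReal.ofReal_le_ofReal_iff hRHS0).1 hle
    calc ∫ z, |P.mStar z| ∂ν ≤ _ := h6
      _ = (2 * (P.M / (1 - P.γ)) + 4 * |b| * (P.M / (1 - P.γ))) * P.w x := by ring
  have hstep2 : ∀ z₁ z₂ : ℝ, z₁ ≤ z₂ →
      |P.F x ↑z₂ - P.F x ↑z₁| ≤ ∫ z in Ioc z₁ z₂, |P.mStar z| ∂ν := by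
    intro z₁ z₂ hz
    rcases eq_or_lt_of_le hz with rfl | hlt
    · rw [sub_self, abs_zero]
      exact setIntegral_nonneg measurableSet_Ioc fun z _ => abs_nonneg _
    · rw [hkey z₁ z₂ hlt, abs_neg]
      simpa [Real.norm_eq_abs] using
        norm_integral_le_integral_norm (μ := ν.restrict (Ioc z₁ z₂)) P.mStar
  have haux : ∀ k : ℕ, ∑ i ∈ Finset.range k, |P.F x ↑(u (i + 1)) - P.F x ↑(u i)|
      ≤ ∫ z in Ioc (u 0) (u k), |P.mStar z| ∂ν := by
    intro k
    induction k with
    | zero =>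
      simpa using setIntegral_nonneg measurableSet_Ioc fun z _ => abs_nonneg (P.mStar z)
    | succ k ih =>
      rw [Finset.sum_range_succ]
      have h5 := hstep2 (u k) (u (k + 1)) (hu (Nat.le_succ k))
      have hunion : (∫ z in Ioc (u 0) (u k), |P.mStar z| ∂ν)
          + ∫ z in Ioc (u k) (u (k + 1)), |P.mStar z| ∂ν
          = ∫ z in Ioc (u 0) (u (k + 1)), |P.mStar z| ∂ν := by
        rw [← setIntegral_union (Ioc_disjoint_Ioc_of_le le_rfl) measurableSet_Ioc
          hm_int.abs.integrableOn hm_int.abs.integrableOn,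
          Ioc_union_Ioc_eq_Ioc (hu (Nat.zero_le k)) (hu (Nat.le_succ k))]
      linarith
  calc ∑ i ∈ Finset.range n, |P.F x ↑(u (i + 1)) - P.F x ↑(u i)|
      ≤ ∫ z in Ioc (u 0) (u n), |P.mStar z| ∂ν := haux n
    _ ≤ ∫ z, |P.mStar z| ∂ν :=
        setIntegral_le_integral hm_int.abs (ae_of_all _ fun z => abs_nonneg _)
    _ ≤ _ := hVx

lemma sum_integral_bound {K : ℝ}
    (hbd : ∀ (x : ℝ) (u : ℕ → ℝ), Monotone u → ∀ n : ℕ,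
      ∑ i ∈ Finset.range n, |P.F x ↑(u (i + 1)) - P.F x ↑(u i)| ≤ K * P.w x)
    (q : Measure ℝ) (hq : Integrable P.w q) (u : ℕ → ℝ) (hu : Monotone u) (n : ℕ) :
    ∑ i ∈ Finset.range n, |(∫ x, P.F x ↑(u (i + 1)) ∂q) - ∫ x, P.F x ↑(u i) ∂q|
      ≤ K * ∫ x, P.w x ∂q := by
  have hFint : ∀ z : ℝ, Integrable (fun x => P.F x ↑z) q := fun z =>
    integrable_wbound P (P.hF_meas _) (fun y => F_bound P ↑z y) hq
  have h1 : ∀ i : ℕ, |(∫ x, P.F x ↑(u (i + 1)) ∂q) - ∫ x, P.F x ↑(u i) ∂q|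
      ≤ ∫ x, |P.F x ↑(u (i + 1)) - P.F x ↑(u i)| ∂q := by
    intro i
    rw [← integral_sub (hFint _) (hFint _)]
    simpa [Real.norm_eq_abs] using
      norm_integral_le_integral_norm (μ := q) fun x => P.F x ↑(u (i + 1)) - P.F x ↑(u i)
  calc ∑ i ∈ Finset.range n, |(∫ x, P.F x ↑(u (i + 1)) ∂q) - ∫ x, P.F x ↑(u i) ∂q|
      ≤ ∑ i ∈ Finset.range n, ∫ x, |P.F x ↑(u (i + 1)) - P.F x ↑(u i)| ∂q :=
        Finset.sum_le_sum fun i _ => h1 i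
    _ = ∫ x, ∑ i ∈ Finset.range n, |P.F x ↑(u (i + 1)) - P.F x ↑(u i)| ∂q :=
        (integral_finset_sum _ fun i _ => ((hFint _).sub (hFint _)).abs).symm
    _ ≤ ∫ x, K * P.w x ∂q :=
        integral_mono (integrable_finset_sum _ fun i _ => ((hFint _).sub (hFint _)).abs)
          (hq.const_mul K) fun x => hbd x u hu n
    _ = K * ∫ x, P.w x ∂q := integral_const_mul K _

lemma bv_of_sum_bound (f : ℝ → ℝ) (B : ℝ)
    (hbd : ∀ (u : ℕ → ℝ), Monotone u → ∀ n : ℕ,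
      ∑ i ∈ Finset.range n, |f (u (i + 1)) - f (u i)| ≤ B) :
    BoundedVariationOn f Set.univ := by
  have hle : eVariationOn f Set.univ ≤ ENNReal.ofReal B := by
    unfold eVariationOn
    refine iSup_le ?_
    rintro ⟨n, u, hu, -⟩
    calc ∑ i ∈ Finset.range n, edist (f (u (i + 1))) (f (u i))
        = ∑ i ∈ Finset.range n, ENNReal.ofReal |f (u (i + 1)) - f (u i)| := by
          refine Finset.sum_congr rfl fun i _ => ?_
          rw [edist_dist, Real.dist_eq]
      _ = ENNReal.ofReal (∑ i ∈ Finset.range n, |f (u (i + 1)) - f (u i)|) :=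
          (ENNReal.ofReal_sum_of_nonneg fun i _ => abs_nonneg _).symm
      _ ≤ ENNReal.ofReal B := ENNReal.ofReal_le_ofReal (hbd u hu n)
  exact ne_top_of_le_ne_top ENNReal.ofReal_ne_top hle

end PCLAux

/-- Under PCL-indexability, the reward metrics `F(p,·)` and `f(x,·)` have
bounded variation on `ℝ`. -/
theorem reward_metrics_boundedVariation (P : Bandit) (h : P.PCLIndexable) :
    (∀ p : Measure ℝ, P.IsInitDist p →
      BoundedVariationOn (fun z : ℝ => P.Fp p z) Set.univ) ∧
    (∀ x : ℝ, BoundedVariationOn (fun z : ℝ => P.f x z) Set.univ) := by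
  obtain ⟨K, hK, hbd⟩ := PCLAux.F_partition_bound P h
  constructor
  · intro p hp
    apply PCLAux.bv_of_sum_bound _ (K * ∫ x, P.w x ∂p)
    intro u hu n
    simpa [Bandit.Fp] using PCLAux.sum_integral_bound P hbd p hp.2 u hu n
  · intro x
    apply PCLAux.bv_of_sum_bound _
      (P.β * (K * ∫ y, P.w y ∂(P.κ true x)) + P.β * (K * ∫ y, P.w y ∂(P.κ false x)))
    intro u hu n
    have h1 := PCLAux.sum_integral_bound P hbd (P.κ true x) (P.hw_int true x) u hu n
    have h0 := PCLAux.sum_integral_bound P hbd (P.κ false x) (P.hw_int false x) u hu n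
    calc ∑ i ∈ Finset.range n, |P.f x ↑(u (i + 1)) - P.f x ↑(u i)|
        ≤ ∑ i ∈ Finset.range n,
            (P.β * |(∫ y, P.F y ↑(u (i + 1)) ∂(P.κ true x)) - ∫ y, P.F y ↑(u i) ∂(P.κ true x)|
              + P.β * |(∫ y, P.F y ↑(u (i + 1)) ∂(P.κ false x))
                - ∫ y, P.F y ↑(u i) ∂(P.κ false x)|) := by
          refine Finset.sum_le_sum fun i _ => ?_
          have hexp : P.f x ↑(u (i + 1)) - P.f x ↑(u i)
              = P.β * (((∫ y, P.F y ↑(u (i + 1)) ∂(P.κ true x))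
                  - ∫ y, P.F y ↑(u i) ∂(P.κ true x))
                - ((∫ y, P.F y ↑(u (i + 1)) ∂(P.κ false x))
                  - ∫ y, P.F y ↑(u i) ∂(P.κ false x))) := by
            simp only [Bandit.f]
            ring
          rw [hexp, abs_mul, abs_of_nonneg P.hβ0]
          calc P.β * |_ - _| ≤ P.β * (|(∫ y, P.F y ↑(u (i + 1)) ∂(P.κ true x))
                  - ∫ y, P.F y ↑(u i) ∂(P.κ true x)|
                + |(∫ y, P.F y ↑(u (i + 1)) ∂(P.κ false x))
                  - ∫ y, P.F y ↑(u i) ∂(P.κ false x)|) :=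
              mul_le_mul_of_nonneg_left (abs_sub _ _) P.hβ0
            _ = _ := by ring
      _ = P.β * ∑ i ∈ Finset.range n,
            |(∫ y, P.F y ↑(u (i + 1)) ∂(P.κ true x)) - ∫ y, P.F y ↑(u i) ∂(P.κ true x)|
          + P.β * ∑ i ∈ Finset.range n,
            |(∫ y, P.F y ↑(u (i + 1)) ∂(P.κ false x)) - ∫ y, P.F y ↑(u i) ∂(P.κ false x)| := by
          rw [Finset.sum_add_distrib, Finset.mul_sum, Finset.mul_sum]
      _ ≤ _ := add_le_add (mul_le_mul_of_nonneg_left h1 P.hβ0)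
            (mul_le_mul_of_nonneg_left h0 P.hβ0)
end
end

section
/- Assume the project is PCL-indexable, i.e., conditions (PCLI1), (PCLI2) and (PCLI3) hold, and let p be an initial distribution on ℝ with ∫ w dp < ∞. Let ν_{F(p,·)} be the unique finite signed Borel measure on ℝ with ν_{F(p,·)}(z₁,z₂] = F(p,z₁) − F(p,z₂) for all finite z₁ ≤ z₂ (which exists since z ↦ F(p,z) is bounded, càdlàg and of bounded variation). Then ν_{F(p,·)} is absolutely continuous with respect to ν_{G(p,·)}, and m* is a Radon–Nikodým derivative of ν_{F(p,·)} with respect to ν_{G(p,·)}: ν_{F(p,·)}(S) = ∫_S m* dν_{G(p,·)} for every Borel set S ⊆ ℝ. -/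
open MeasureTheory ProbabilityTheory Filter Topology Set

noncomputable section

section AuxProof

namespace Bandit

variable (P : Bandit)

lemma wpos (x : ℝ) : 0 < P.w x := lt_of_lt_of_le one_pos (P.hw_one x)

lemma wnn (x : ℝ) : 0 ≤ P.w x := (P.wpos x).le

lemma integrable_of_wbdd {v : ℝ → ℝ} (hm : Measurable v) {C : ℝ}
    (hb : ∀ y, |v y| ≤ C * P.w y) {μ : Measure ℝ} (hw : Integrable P.w μ) :
    Integrable v μ := by
  refine Integrable.mono' (hw.const_mul C) hm.aestronglyMeasurable ?_
  exact Filter.Eventually.of_forall fun y => by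
    simpa [Real.norm_eq_abs] using hb y

lemma G_int_ker (z : EReal) (a : Bool) (x : ℝ) :
    Integrable (fun y => P.G y z) (P.κ a x) := by
  obtain ⟨C, hC⟩ := P.hG_bdd z
  exact P.integrable_of_wbdd (P.hG_meas z) hC (P.hw_int a x)

lemma F_int_ker (z : EReal) (a : Bool) (x : ℝ) :
    Integrable (fun y => P.F y z) (P.κ a x) := by
  obtain ⟨C, hC⟩ := P.hF_bdd z
  exact P.integrable_of_wbdd (P.hF_meas z) hC (P.hw_int a x)

lemma nonneg_of_fixed (σ : ℝ → Bool) (v h : ℝ → ℝ) (hm : Measurable v) (C : ℝ)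
    (hb : ∀ x, |v x| ≤ C * P.w x)
    (hfix : ∀ x, v x = h x + P.β * ∫ y, v y ∂(P.κ (σ x) x))
    (hh : ∀ x, 0 ≤ h x) : ∀ x, 0 ≤ v x := by
  have hγ0 : 0 ≤ P.γ := le_trans P.hβ0 P.hβγ
  have hC : 0 ≤ C := by
    by_contra hC
    push_neg at hC
    have := (abs_nonneg (v 0)).trans (hb 0)
    nlinarith [P.wpos 0]
  have hvint : ∀ x, Integrable v (P.κ (σ x) x) :=
    fun x => P.integrable_of_wbdd hm hb (P.hw_int (σ x) x)
  have key : ∀ n : ℕ, ∀ x, -(C * P.γ ^ n * P.w x) ≤ v x := by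
    intro n
    induction n with
    | zero => intro x; simpa using (neg_abs_le (v x)).trans' (by simpa using neg_le_neg (hb x))
    | succ n ih =>
      intro x
      have hint : ∫ y, v y ∂(P.κ (σ x) x) ≥
          ∫ y, -(C * P.γ ^ n * P.w y) ∂(P.κ (σ x) x) := by
        refine integral_mono ?_ (hvint x) ih
        exact ((P.hw_int (σ x) x).const_mul _).neg
      have h1 : ∫ y, -(C * P.γ ^ n * P.w y) ∂(P.κ (σ x) x)
          = -(C * P.γ ^ n) * ∫ y, P.w y ∂(P.κ (σ x) x) := by
        rw [← integral_const_mul]; congr 1; ext y; ring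
      have hwnn : 0 ≤ ∫ y, P.w y ∂(P.κ (σ x) x) :=
        integral_nonneg fun y => P.wnn y
      have hdrift := P.hw_drift (σ x) x
      have : -(C * P.γ ^ n * (P.γ * P.w x)) ≤ P.β * ∫ y, v y ∂(P.κ (σ x) x) := by
        have hCγ : 0 ≤ C * P.γ ^ n := mul_nonneg hC (pow_nonneg hγ0 n)
        calc -(C * P.γ ^ n * (P.γ * P.w x)) ≤ -(C * P.γ ^ n) * (P.β * ∫ y, P.w y ∂(P.κ (σ x) x)) := by
              rw [neg_mul]
              refine neg_le_neg ?_
              have := mul_le_mul_of_nonneg_left hdrift hCγ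
              linarith
          _ = P.β * (-(C * P.γ ^ n) * ∫ y, P.w y ∂(P.κ (σ x) x)) := by ring
          _ = P.β * ∫ y, -(C * P.γ ^ n * P.w y) ∂(P.κ (σ x) x) := by rw [h1]
          _ ≤ P.β * ∫ y, v y ∂(P.κ (σ x) x) := by
              exact mul_le_mul_of_nonneg_left hint P.hβ0
      have := hfix x
      have hhx := hh x
      have : v x ≥ -(C * P.γ ^ n * (P.γ * P.w x)) := by linarith
      calc -(C * P.γ ^ (n+1) * P.w x) = -(C * P.γ ^ n * (P.γ * P.w x)) := by ring
        _ ≤ v x := this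
  intro x
  have hlim : Filter.Tendsto (fun n : ℕ => -(C * P.γ ^ n * P.w x)) Filter.atTop (nhds 0) := by
    have h0 : Filter.Tendsto (fun n : ℕ => P.γ ^ n) Filter.atTop (nhds 0) :=
      tendsto_pow_atTop_nhds_zero_of_lt_one hγ0 P.hγ1
    have := (h0.const_mul C).mul_const (P.w x)
    simpa using this.neg
  exact le_of_tendsto hlim (Filter.Eventually.of_forall fun n => key n x)

lemma eq_zero_of_fixed (σ : ℝ → Bool) (v : ℝ → ℝ) (hm : Measurable v) (C : ℝ)
    (hb : ∀ x, |v x| ≤ C * P.w x)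
    (hfix : ∀ x, v x = P.β * ∫ y, v y ∂(P.κ (σ x) x)) : ∀ x, v x = 0 := by
  have h1 : ∀ x, 0 ≤ v x := by
    refine P.nonneg_of_fixed σ v (fun _ => 0) hm C hb ?_ (fun _ => le_refl 0)
    intro x; simpa using hfix x
  have h2 : ∀ x, 0 ≤ -v x := by
    refine P.nonneg_of_fixed σ (fun x => -v x) (fun _ => 0) hm.neg C ?_ ?_ (fun _ => le_refl 0)
    · intro x; simpa using hb x
    · intro x
      rw [integral_neg]
      simp only [zero_add]
      rw [← neg_mul_eq_mul_neg, ← hfix x]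
  intro x
  have := h1 x; have := h2 x; linarith

end Bandit

end AuxProof
section AuxProof2

namespace Bandit

variable (P : Bandit)

lemma G_anti (hg : P.PCLI1) {z₁ z₂ : EReal} (hz : z₁ ≤ z₂) (x : ℝ) :
    P.G x z₂ ≤ P.G x z₁ := by
  obtain ⟨C₁, hC₁⟩ := P.hG_bdd z₁
  obtain ⟨C₂, hC₂⟩ := P.hG_bdd z₂
  set σ : ℝ → Bool := fun x => decide (z₁ < (x : EReal)) with hσ
  set v : ℝ → ℝ := fun x => P.G x z₁ - P.G x z₂ with hv
  set h : ℝ → ℝ := fun x => v x - P.β * ∫ y, v y ∂(P.κ (σ x) x) with hhdef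
  have hsub : ∀ a x, ∫ y, v y ∂(P.κ a x)
      = (∫ y, P.G y z₁ ∂(P.κ a x)) - ∫ y, P.G y z₂ ∂(P.κ a x) :=
    fun a x => integral_sub (P.G_int_ker z₁ a x) (P.G_int_ker z₂ a x)
  have hnn : 0 ≤ v x := by
    refine P.nonneg_of_fixed σ v h ((P.hG_meas z₁).sub (P.hG_meas z₂)) (C₁ + C₂) ?_
      (fun x => by simp [hhdef]) ?_ x
    · intro x
      calc |v x| ≤ |P.G x z₁| + |P.G x z₂| := abs_sub _ _
        _ ≤ C₁ * P.w x + C₂ * P.w x := add_le_add (hC₁ x) (hC₂ x)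
        _ = (C₁ + C₂) * P.w x := by ring
    · intro x
      by_cases h1 : z₁ < (x : EReal)
      · have hσx : σ x = true := by simp [hσ, h1]
        by_cases h2 : z₂ < (x : EReal)
        · have e1 := P.hG_eq x z₁
          have e2 := P.hG_eq x z₂
          rw [decide_eq_true h1] at e1
          rw [decide_eq_true h2] at e2
          simp only [hhdef, hσx]
          rw [hsub true x]
          simp only [hv]
          rw [e1, e2]
          ring_nf
          exact le_rfl
        · have e1 := P.hG_eq x z₁
          have e2 := P.hG_eq x z₂
          rw [decide_eq_true h1] at e1
          rw [decide_eq_false h2] at e2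
          have : h x = P.g x z₂ := by
            simp only [hhdef, hσx]
            rw [hsub true x]
            simp only [hv]
            rw [e1, e2]
            simp only [Bandit.g]
            ring
          rw [this]
          exact (hg x z₂).le
      · have hσx : σ x = false := by simp [hσ, h1]
        have h2 : ¬ z₂ < (x : EReal) := fun hlt => h1 (lt_of_le_of_lt hz hlt |>.trans_le le_rfl) 
        have e1 := P.hG_eq x z₁
        have e2 := P.hG_eq x z₂
        rw [decide_eq_false h1] at e1
        rw [decide_eq_false h2] at e2
        simp only [hhdef, hσx]
        rw [hsub false x]
        simp only [hv]
        rw [e1, e2]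
        ring_nf
        exact le_rfl
  simp only [hv] at hnn
  linarith

end Bandit

end AuxProof2
section AuxProof3

namespace Bandit

variable (P : Bandit)

lemma bdd_const_nonneg {C : ℝ} {v : ℝ → ℝ} (hb : ∀ x, |v x| ≤ C * P.w x) : 0 ≤ C := by
  by_contra hC
  push_neg at hC
  have := (abs_nonneg (v 0)).trans (hb 0)
  nlinarith [P.wpos 0]

lemma G_ciSup (hg : P.PCLI1) (z₀ : ℝ) (x : ℝ) :
    (⨆ n : ℕ, P.G x ((z₀ + 1/((n:ℝ)+1) : ℝ) : EReal)) = P.G x ((z₀ : ℝ) : EReal) := by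
  obtain ⟨C₀, hC₀⟩ := P.hG_bdd ((z₀ : ℝ) : EReal)
  obtain ⟨C₁, hC₁⟩ := P.hG_bdd ((z₀ + 1 : ℝ) : EReal)
  have hC₀0 : 0 ≤ C₀ := P.bdd_const_nonneg hC₀
  have hC₁0 : 0 ≤ C₁ := P.bdd_const_nonneg hC₁
  set seq : ℕ → ℝ := fun n => z₀ + 1/((n:ℝ)+1) with hseq
  have hseq0 : seq 0 = z₀ + 1 := by norm_num [hseq]
  have hgt : ∀ n, z₀ < seq n := fun n => by
    have : (0:ℝ) < 1/((n:ℝ)+1) := by positivity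
    simp only [hseq]; linarith
  have hle1 : ∀ n, seq n ≤ z₀ + 1 := fun n => by
    have h1 : 1/((n:ℝ)+1) ≤ 1 := by
      rw [div_le_one (by positivity)]
      simp
    simp only [hseq]; linarith
  have hanti : Antitone seq := fun a b hab => by
    simp only [hseq]
    have : 1/((b:ℝ)+1) ≤ 1/((a:ℝ)+1) := by
      apply one_div_le_one_div_of_le (by positivity)
      exact_mod_cast by omega
    linarith
  set L : ℝ → ℝ := fun y => ⨆ n : ℕ, P.G y ((seq n : ℝ) : EReal) with hL
  have hmono : ∀ y, Monotone fun n : ℕ => P.G y ((seq n : ℝ) : EReal) := fun y a b hab =>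
    P.G_anti hg (EReal.coe_le_coe_iff.2 (hanti hab)) y
  have hbdd : ∀ y, BddAbove (Set.range fun n : ℕ => P.G y ((seq n : ℝ) : EReal)) := fun y =>
    ⟨P.G y ((z₀:ℝ):EReal), by
      rintro _ ⟨n, rfl⟩
      exact P.G_anti hg (EReal.coe_le_coe_iff.2 (hgt n).le) y⟩
  have htd : ∀ y, Filter.Tendsto (fun n : ℕ => P.G y ((seq n : ℝ) : EReal))
      Filter.atTop (nhds (L y)) := fun y => tendsto_atTop_ciSup (hmono y) (hbdd y)
  have hLmeas : Measurable L := by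
    apply measurable_of_tendsto_metrizable (fun n => P.hG_meas _)
    exact tendsto_pi_nhds.2 htd
  have hGbd : ∀ n y, |P.G y ((seq n : ℝ) : EReal)| ≤ |P.G y ((z₀:ℝ):EReal)| + |P.G y ((z₀+1:ℝ):EReal)| := by
    intro n y
    have hub : P.G y ((seq n : ℝ):EReal) ≤ P.G y ((z₀:ℝ):EReal) :=
      P.G_anti hg (EReal.coe_le_coe_iff.2 (hgt n).le) y
    have hlb : P.G y ((z₀+1:ℝ):EReal) ≤ P.G y ((seq n : ℝ):EReal) :=
      P.G_anti hg (EReal.coe_le_coe_iff.2 (hle1 n)) y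
    rw [abs_le]
    constructor
    · have := neg_abs_le (P.G y ((z₀+1:ℝ):EReal))
      have h0 := abs_nonneg (P.G y ((z₀:ℝ):EReal))
      linarith
    · have := le_abs_self (P.G y ((z₀:ℝ):EReal))
      have h0 := abs_nonneg (P.G y ((z₀+1:ℝ):EReal))
      linarith
  have hLbd : ∀ y, |L y| ≤ (C₀ + C₁) * P.w y := by
    intro y
    have h1 : L y ≤ P.G y ((z₀:ℝ):EReal) := by
      apply ciSup_le
      intro n
      exact P.G_anti hg (EReal.coe_le_coe_iff.2 (hgt n).le) y
    have h2 : P.G y ((seq 0 : ℝ):EReal) ≤ L y := le_ciSup (hbdd y) 0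
    rw [hseq0] at h2
    rw [abs_le]
    constructor
    · have := (neg_abs_le _).trans h2
      have h3 := (neg_le_neg (hC₁ y))
      have h4 := mul_nonneg hC₀0 (P.wnn y)
      have h5 := neg_abs_le (P.G y ((z₀+1:ℝ):EReal))
      have h6 := hC₁ y
      nlinarith
    · have h6 := (h1.trans (le_abs_self _)).trans (hC₀ y)
      have h4 := mul_nonneg hC₁0 (P.wnn y)
      linarith
  -- fixed point equation for L
  have hfixL : ∀ y, L y = P.c y (decide (((z₀:ℝ):EReal) < (y : EReal))) +
      P.β * ∫ u, L u ∂(P.κ (decide (((z₀:ℝ):EReal) < (y : EReal))) y) := by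
    intro y
    set a₀ := decide (((z₀:ℝ):EReal) < (y : EReal)) with ha₀
    have hev : ∀ᶠ n in Filter.atTop, decide (((seq n : ℝ):EReal) < (y : EReal)) = a₀ := by
      by_cases hy : z₀ < y
      · have ha : a₀ = true := by
          simp [ha₀, EReal.coe_lt_coe_iff, hy]
        have hts : Filter.Tendsto seq Filter.atTop (nhds z₀) := by
          have h0 : Filter.Tendsto (fun n : ℕ => 1/((n:ℝ)+1)) Filter.atTop (nhds 0) :=
            tendsto_one_div_add_atTop_nhds_zero_nat
          have := h0.const_add z₀
          simpa [hseq] using this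
        have := hts.eventually_lt_const hy
        filter_upwards [this] with n hn
        simp [EReal.coe_lt_coe_iff, hn, ha]
      · have ha : a₀ = false := by
          simp [ha₀, EReal.coe_lt_coe_iff, hy]
        refine Filter.Eventually.of_forall fun n => ?_
        have : ¬ (seq n < y) := by
          push_neg at hy ⊢
          exact hy.trans (hgt n).le
        simp [EReal.coe_lt_coe_iff, this, ha]
    have heq : ∀ᶠ n in Filter.atTop, P.G y ((seq n : ℝ):EReal) =
        P.c y a₀ + P.β * ∫ u, P.G u ((seq n : ℝ):EReal) ∂(P.κ a₀ y) := by
      filter_upwards [hev] with n hn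
      have := P.hG_eq y ((seq n : ℝ):EReal)
      rw [hn] at this
      exact this
    have hint_td : Filter.Tendsto (fun n : ℕ => ∫ u, P.G u ((seq n : ℝ):EReal) ∂(P.κ a₀ y))
        Filter.atTop (nhds (∫ u, L u ∂(P.κ a₀ y))) := by
      refine tendsto_integral_of_dominated_convergence
        (fun u => |P.G u ((z₀:ℝ):EReal)| + |P.G u ((z₀+1:ℝ):EReal)|)
        (fun n => (P.hG_meas _).aestronglyMeasurable) ?_ ?_ ?_
      · exact (P.G_int_ker _ a₀ y).abs.add (P.G_int_ker _ a₀ y).abs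
      · intro n
        exact Filter.Eventually.of_forall fun u => by
          simpa [Real.norm_eq_abs] using hGbd n u
      · exact Filter.Eventually.of_forall fun u => htd u
    have h2 : Filter.Tendsto (fun n : ℕ => P.G y ((seq n : ℝ):EReal)) Filter.atTop
        (nhds (P.c y a₀ + P.β * ∫ u, L u ∂(P.κ a₀ y))) := by
      rw [Filter.tendsto_congr' heq]
      exact ((hint_td.const_mul P.β).const_add _)
    exact tendsto_nhds_unique (htd y) h2
  -- uniqueness
  have hzero : ∀ y, L y - P.G y ((z₀:ℝ):EReal) = 0 := by
    obtain ⟨CL, hCL⟩ : ∃ C, ∀ y, |L y| ≤ C * P.w y := ⟨C₀ + C₁, hLbd⟩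
    refine P.eq_zero_of_fixed (fun y => decide (((z₀:ℝ):EReal) < (y : EReal)))
      (fun y => L y - P.G y ((z₀:ℝ):EReal)) (hLmeas.sub (P.hG_meas _)) (CL + C₀) ?_ ?_
    · intro y
      calc |L y - P.G y ((z₀:ℝ):EReal)| ≤ |L y| + |P.G y ((z₀:ℝ):EReal)| := abs_sub _ _
        _ ≤ CL * P.w y + C₀ * P.w y := add_le_add (hCL y) (hC₀ y)
        _ = (CL + C₀) * P.w y := by ring
    · intro y
      have e0 := P.hG_eq y ((z₀:ℝ):EReal)
      have eL := hfixL y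
      have hsub : ∫ u, (L u - P.G u ((z₀:ℝ):EReal)) ∂(P.κ (decide (((z₀:ℝ):EReal) < (y:EReal))) y)
          = (∫ u, L u ∂(P.κ (decide (((z₀:ℝ):EReal) < (y:EReal))) y))
            - ∫ u, P.G u ((z₀:ℝ):EReal) ∂(P.κ (decide (((z₀:ℝ):EReal) < (y:EReal))) y) :=
        integral_sub (P.integrable_of_wbdd hLmeas hCL (P.hw_int _ y)) (P.G_int_ker _ _ y)
      rw [hsub]
      show L y - P.G y ((z₀:ℝ):EReal) = _
      rw [eL, e0]
      ring
  have := hzero x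
  simp only [hL] at this
  linarith

end Bandit

end AuxProof3
section AuxProof4

namespace Bandit

variable (P : Bandit)

lemma G_rc (hg : P.PCLI1) (x z₀ : ℝ) :
    ContinuousWithinAt (fun z : ℝ => -P.G x ((z : ℝ) : EReal)) (Set.Ici z₀) z₀ := by
  have hanti : ∀ ⦃a b : ℝ⦄, a ≤ b → P.G x ((b:ℝ):EReal) ≤ P.G x ((a:ℝ):EReal) :=
    fun a b hab => P.G_anti hg (EReal.coe_le_coe_iff.2 hab) x
  rw [ContinuousWithinAt]
  rw [tendsto_order]
  constructor
  · intro b hb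
    filter_upwards [self_mem_nhdsWithin] with z hz
    have := hanti hz
    show b < -P.G x ((z:ℝ):EReal)
    linarith
  · intro b hb
    have hsup := P.G_ciSup hg z₀ x
    have hlt : -b < ⨆ n : ℕ, P.G x ((z₀ + 1/((n:ℝ)+1) : ℝ) : EReal) := by
      rw [hsup]; linarith
    obtain ⟨n, hn⟩ := exists_lt_of_lt_ciSup hlt
    have hz₀lt : z₀ < z₀ + 1/((n:ℝ)+1) := by
      have : (0:ℝ) < 1/((n:ℝ)+1) := by positivity
      linarith
    filter_upwards [Ico_mem_nhdsGE hz₀lt] with z hz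
    have := hanti hz.2.le
    show -P.G x ((z:ℝ):EReal) < b
    linarith

/-- The Stieltjes function `z ↦ -G(x,z)`. -/
def stieltjesG (hg : P.PCLI1) (x : ℝ) : StieltjesFunction ℝ where
  toFun := fun z : ℝ => -P.G x ((z : ℝ) : EReal)
  mono' := fun a b hab => neg_le_neg (P.G_anti hg (EReal.coe_le_coe_iff.2 hab) x)
  right_continuous' := fun z₀ => P.G_rc hg x z₀

lemma stieltjesG_Ioc (hg : P.PCLI1) (x : ℝ) (a b : ℝ) :
    (P.stieltjesG hg x).measure (Set.Ioc a b)
      = ENNReal.ofReal (P.G x ((a:ℝ):EReal) - P.G x ((b:ℝ):EReal)) := by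
  rw [StieltjesFunction.measure_Ioc]
  congr 1
  show -P.G x ((b:ℝ):EReal) - -P.G x ((a:ℝ):EReal) = _
  ring

lemma isLS_stieltjesG (hg : P.PCLI1) (x : ℝ) :
    IsLSMeasureOfAnti (fun z : ℝ => P.G x ((z : ℝ) : EReal)) (P.stieltjesG hg x).measure :=
  fun z₁ z₂ _ => P.stieltjesG_Ioc hg x z₁ z₂

end Bandit

end AuxProof4
section AuxProof5

namespace Bandit

variable (P : Bandit)

lemma G_int_p {p : Measure ℝ} (hp : P.IsInitDist p) (z : EReal) :
    Integrable (fun x => P.G x z) p := by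
  obtain ⟨C, hC⟩ := P.hG_bdd z
  exact P.integrable_of_wbdd (P.hG_meas z) hC hp.2

lemma F_int_p {p : Measure ℝ} (hp : P.IsInitDist p) (z : EReal) :
    Integrable (fun x => P.F x z) p := by
  obtain ⟨C, hC⟩ := P.hF_bdd z
  exact P.integrable_of_wbdd (P.hF_meas z) hC hp.2

lemma Gp_anti (hg : P.PCLI1) {p : Measure ℝ} (hp : P.IsInitDist p) {z₁ z₂ : EReal}
    (hz : z₁ ≤ z₂) : P.Gp p z₂ ≤ P.Gp p z₁ :=
  integral_mono (P.G_int_p hp z₂) (P.G_int_p hp z₁) (fun x => P.G_anti hg hz x)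

lemma meas_nux_restrict (hg : P.PCLI1) (z₁ z₂ : ℝ) :
    Measurable (fun x => ((P.stieltjesG hg x).measure.restrict (Set.Ioc z₁ z₂))) := by
  apply Measure.measurable_of_measurable_coe
  intro S hS
  have key : ∀ S : Set ℝ, MeasurableSet S →
      Measurable fun x => (P.stieltjesG hg x).measure (S ∩ Set.Ioc z₁ z₂) := by
    have hgen : (inferInstance : MeasurableSpace ℝ)
        = MeasurableSpace.generateFrom {S : Set ℝ | ∃ l u, l < u ∧ Set.Ioc l u = S} :=
      BorelSpace.measurable_eq.trans (borel_eq_generateFrom_Ioc ℝ)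
    refine MeasurableSpace.induction_on_inter hgen (isPiSystem_Ioc (id : ℝ → ℝ) id) ?_ ?_ ?_ ?_
    · simp
    · rintro t ⟨l, u, hlu, rfl⟩
      simp only [Set.Ioc_inter_Ioc]
      simp_rw [P.stieltjesG_Ioc hg]
      exact ENNReal.measurable_ofReal.comp ((P.hG_meas _).sub (P.hG_meas _))
    · intro t ht hmt
      have hset : ∀ x : ℝ, tᶜ ∩ Set.Ioc z₁ z₂ = Set.Ioc z₁ z₂ \ (t ∩ Set.Ioc z₁ z₂) := by
        intro x; ext y; simp; tauto
      have : (fun x => (P.stieltjesG hg x).measure (tᶜ ∩ Set.Ioc z₁ z₂))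
          = fun x => (P.stieltjesG hg x).measure (Set.Ioc z₁ z₂)
              - (P.stieltjesG hg x).measure (t ∩ Set.Ioc z₁ z₂) := by
        funext x
        rw [hset x, measure_diff Set.inter_subset_right
          (ht.inter measurableSet_Ioc).nullMeasurableSet]
        refine ne_top_of_le_ne_top ?_ (measure_mono Set.inter_subset_right)
        rw [P.stieltjesG_Ioc hg]
        exact ENNReal.ofReal_ne_top
      rw [this]
      refine Measurable.sub ?_ hmt
      simp_rw [P.stieltjesG_Ioc hg]
      exact ENNReal.measurable_ofReal.comp ((P.hG_meas _).sub (P.hG_meas _))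
    · intro f hdisj hf hmf
      have : (fun x => (P.stieltjesG hg x).measure ((⋃ i, f i) ∩ Set.Ioc z₁ z₂))
          = fun x => ∑' i, (P.stieltjesG hg x).measure (f i ∩ Set.Ioc z₁ z₂) := by
        funext x
        rw [Set.iUnion_inter]
        exact measure_iUnion (fun i j hij => ((hdisj hij).inter_right _).inter_left _)
          (fun i => (hf i).inter measurableSet_Ioc)
      rw [this]
      exact Measurable.ennreal_tsum hmf
  have := key S hS
  simp_rw [Measure.restrict_apply hS]
  exact this

lemma lint_nu {p : Measure ℝ} (hp : P.IsInitDist p) (hg : P.PCLI1)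
    {νG : Measure ℝ} (hνG : IsLSMeasureOfAnti (fun z : ℝ => P.Gp p z) νG) (u v : ℝ) :
    ∫⁻ x, ENNReal.ofReal (P.G x ((u:ℝ):EReal) - P.G x ((v:ℝ):EReal)) ∂p
      = νG (Set.Ioc u v) := by
  rcases le_or_gt u v with huv | huv
  · rw [hνG u v huv]
    rw [← ofReal_integral_eq_lintegral_ofReal]
    · congr 1
      rw [integral_sub (P.G_int_p hp _) (P.G_int_p hp _)]
      rfl
    · exact (P.G_int_p hp _).sub (P.G_int_p hp _)
    · exact Filter.Eventually.of_forall fun x => by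
        simpa [Pi.zero_apply, sub_nonneg] using P.G_anti hg (EReal.coe_le_coe_iff.2 huv) x
  · have : Set.Ioc u v = (∅ : Set ℝ) := Set.Ioc_eq_empty (by exact not_lt.2 huv.le)
    rw [this, measure_empty]
    have : ∀ x, ENNReal.ofReal (P.G x ((u:ℝ):EReal) - P.G x ((v:ℝ):EReal)) = 0 := by
      intro x
      rw [ENNReal.ofReal_eq_zero]
      have := P.G_anti hg (EReal.coe_le_coe_iff.2 huv.le) x
      linarith
    simp_rw [this]
    simp

lemma restrict_eq_bind {p : Measure ℝ} (hp : P.IsInitDist p) (hg : P.PCLI1)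
    {νG : Measure ℝ} (hνG : IsLSMeasureOfAnti (fun z : ℝ => P.Gp p z) νG) (z₁ z₂ : ℝ)
    (hz : z₁ ≤ z₂) :
    νG.restrict (Set.Ioc z₁ z₂)
      = p.bind (fun x => (P.stieltjesG hg x).measure.restrict (Set.Ioc z₁ z₂)) := by
  have hmeas := P.meas_nux_restrict hg z₁ z₂
  have happly : ∀ S : Set ℝ, MeasurableSet S →
      (p.bind fun x => (P.stieltjesG hg x).measure.restrict (Set.Ioc z₁ z₂)) S
        = ∫⁻ x, (P.stieltjesG hg x).measure (S ∩ Set.Ioc z₁ z₂) ∂p := by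
    intro S hS
    rw [Measure.bind_apply hS hmeas.aemeasurable]
    simp_rw [Measure.restrict_apply hS]
  have hIoc : ∀ a b : ℝ, νG.restrict (Set.Ioc z₁ z₂) (Set.Ioc a b)
      = (p.bind fun x => (P.stieltjesG hg x).measure.restrict (Set.Ioc z₁ z₂)) (Set.Ioc a b) := by
    intro a b
    rw [happly _ measurableSet_Ioc, Measure.restrict_apply measurableSet_Ioc,
      Set.Ioc_inter_Ioc]
    simp_rw [P.stieltjesG_Ioc hg]
    rw [P.lint_nu hp hg hνG]
  haveI : IsFiniteMeasure (νG.restrict (Set.Ioc z₁ z₂)) := by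
    constructor
    rw [Measure.restrict_apply_univ, hνG z₁ z₂ hz]
    exact ENNReal.ofReal_lt_top
  refine Measure.ext_of_Ioc_finite _ _ ?_ ?_
  · rw [happly _ MeasurableSet.univ, Measure.restrict_apply_univ]
    simp_rw [Set.univ_inter]
    simp_rw [P.stieltjesG_Ioc hg]
    rw [P.lint_nu hp hg hνG]
  · intro a b _
    exact hIoc a b

end Bandit

end AuxProof5
section AuxProof6

namespace Bandit

variable (P : Bandit)

lemma interval_key (hPCL : P.PCLIndexable) {p : Measure ℝ} (hp : P.IsInitDist p)
    {νG : Measure ℝ} (hνG : IsLSMeasureOfAnti (fun z : ℝ => P.Gp p z) νG)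
    (z₁ z₂ : ℝ) (hz : z₁ < z₂) :
    ∫ z in Set.Ioc z₁ z₂, P.mStar z ∂νG
      = P.Fp p ((z₁ : ℝ) : EReal) - P.Fp p ((z₂ : ℝ) : EReal) := by
  obtain ⟨hg, hPC2, hPC3⟩ := hPCL
  obtain ⟨hm_mono, hm_cont, hm_bdd⟩ := hPC2
  obtain ⟨b, hb⟩ := isCompact_Icc.exists_bound_of_continuousOn
    (s := Set.Icc z₁ z₂) hm_cont.continuousOn
  set I := Set.Ioc z₁ z₂ with hI
  have hbd : ∀ t ∈ I, |P.mStar t| ≤ b := fun t ht => by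
    simpa [Real.norm_eq_abs] using hb t (Set.Ioc_subset_Icc_self ht)
  have hnux : ∀ x : ℝ, (P.stieltjesG hg x).measure I
      = ENNReal.ofReal (P.G x ((z₁:ℝ):EReal) - P.G x ((z₂:ℝ):EReal)) :=
    fun x => P.stieltjesG_Ioc hg x z₁ z₂
  have hGnn : ∀ x : ℝ, 0 ≤ P.G x ((z₁:ℝ):EReal) - P.G x ((z₂:ℝ):EReal) :=
    fun x => sub_nonneg.2 (P.G_anti hg (EReal.coe_le_coe_iff.2 hz.le) x)
  have hphi : ∀ x : ℝ, ∫ z in I, (P.mStar z + b) ∂((P.stieltjesG hg x).measure)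
      = (P.F x ((z₁:ℝ):EReal) - P.F x ((z₂:ℝ):EReal))
        + b * (P.G x ((z₁:ℝ):EReal) - P.G x ((z₂:ℝ):EReal)) := by
    intro x
    have hPC := hPC3 x _ (P.isLS_stieltjesG hg x) z₁ z₂ hz
    have hint : IntegrableOn P.mStar I ((P.stieltjesG hg x).measure) :=
      hm_cont.integrableOn_Ioc
    rw [integral_add hint (integrableOn_const
      (by rw [hnux x]; exact ENNReal.ofReal_ne_top))]
    rw [setIntegral_const, measureReal_def, hnux x, ENNReal.toReal_ofReal (hGnn x)]
    have hmid : ∫ z in I, P.mStar z ∂((P.stieltjesG hg x).measure)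
        = P.F x ((z₁:ℝ):EReal) - P.F x ((z₂:ℝ):EReal) := by
      have := hPC
      simp only [hI] at this ⊢
      linarith
    rw [hmid]
    simp only [smul_eq_mul]
    ring
  have hphinn : ∀ x : ℝ, 0 ≤ (P.F x ((z₁:ℝ):EReal) - P.F x ((z₂:ℝ):EReal))
      + b * (P.G x ((z₁:ℝ):EReal) - P.G x ((z₂:ℝ):EReal)) := by
    intro x
    rw [← hphi x]
    refine setIntegral_nonneg measurableSet_Ioc fun t ht => ?_
    have h1 := abs_le.1 (hbd t ht)
    linarith [h1.1]
  have hνGI : (νG I).toReal = P.Gp p ((z₁:ℝ):EReal) - P.Gp p ((z₂:ℝ):EReal) := by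
    rw [hνG z₁ z₂ hz.le, ENNReal.toReal_ofReal
      (sub_nonneg.2 (P.Gp_anti hg hp (EReal.coe_le_coe_iff.2 hz.le)))]
  have hνGIfin : νG I < ⊤ := by rw [hνG z₁ z₂ hz.le]; exact ENNReal.ofReal_lt_top
  haveI : IsFiniteMeasure (νG.restrict I) :=
    ⟨by rw [Measure.restrict_apply_univ]; exact hνGIfin⟩
  have hint_m : IntegrableOn P.mStar I νG := by
    refine Integrable.mono' (integrable_const b) hm_cont.aestronglyMeasurable.restrict ?_
    filter_upwards [ae_restrict_mem measurableSet_Ioc] with t ht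
    simpa [Real.norm_eq_abs] using hbd t ht
  have hsplit : ∫ z in I, (P.mStar z + b) ∂νG
      = (∫ z in I, P.mStar z ∂νG) + b * (νG I).toReal := by
    rw [integral_add hint_m (integrableOn_const hνGIfin.ne), setIntegral_const, measureReal_def]
    simp only [smul_eq_mul]
    ring
  have hchain : ∫ z in I, (P.mStar z + b) ∂νG
      = (P.Fp p ((z₁:ℝ):EReal) - P.Fp p ((z₂:ℝ):EReal))
        + b * (P.Gp p ((z₁:ℝ):EReal) - P.Gp p ((z₂:ℝ):EReal)) := by
    have h1 : ∫ z in I, (P.mStar z + b) ∂νG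
        = ENNReal.toReal (∫⁻ z in I, ENNReal.ofReal (P.mStar z + b) ∂νG) := by
      rw [integral_eq_lintegral_of_nonneg_ae]
      · filter_upwards [ae_restrict_mem measurableSet_Ioc] with t ht
        have h1 := abs_le.1 (hbd t ht)
        simp only [Pi.zero_apply]
        linarith [h1.1]
      · exact (hm_cont.add continuous_const).aestronglyMeasurable.restrict
    have h2 : ∫⁻ z in I, ENNReal.ofReal (P.mStar z + b) ∂νG
        = ∫⁻ x, ENNReal.ofReal ((P.F x ((z₁:ℝ):EReal) - P.F x ((z₂:ℝ):EReal))
            + b * (P.G x ((z₁:ℝ):EReal) - P.G x ((z₂:ℝ):EReal))) ∂p := by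
      have hrw : (∫⁻ z in I, ENNReal.ofReal (P.mStar z + b) ∂νG)
          = ∫⁻ z, ENNReal.ofReal (P.mStar z + b) ∂(νG.restrict I) := rfl
      rw [hrw, P.restrict_eq_bind hp hg hνG z₁ z₂ hz.le,
        Measure.lintegral_bind (P.meas_nux_restrict hg z₁ z₂).aemeasurable
          (show Measurable fun z => ENNReal.ofReal (P.mStar z + b) from
            (hm_cont.measurable.add measurable_const).ennreal_ofReal).aemeasurable]
      congr 1
      funext x
      rw [← ofReal_integral_eq_lintegral_ofReal]
      · rw [hphi x]
      · exact (hm_cont.add continuous_const).integrableOn_Ioc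
      · filter_upwards [ae_restrict_mem measurableSet_Ioc] with t ht
        have h1 := abs_le.1 (hbd t ht)
        simp only [Pi.zero_apply]
        linarith [h1.1]
    have hφint : Integrable (fun x => (P.F x ((z₁:ℝ):EReal) - P.F x ((z₂:ℝ):EReal))
        + b * (P.G x ((z₁:ℝ):EReal) - P.G x ((z₂:ℝ):EReal))) p :=
      ((P.F_int_p hp _).sub (P.F_int_p hp _)).add
        (((P.G_int_p hp _).sub (P.G_int_p hp _)).const_mul b)
    have hA : Integrable (fun x => P.F x ((z₁:ℝ):EReal) - P.F x ((z₂:ℝ):EReal)) p :=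
      (P.F_int_p hp _).sub (P.F_int_p hp _)
    have hB : Integrable (fun x => b * (P.G x ((z₁:ℝ):EReal) - P.G x ((z₂:ℝ):EReal))) p :=
      ((P.G_int_p hp _).sub (P.G_int_p hp _)).const_mul b
    have heq : ∫ x, ((P.F x ((z₁:ℝ):EReal) - P.F x ((z₂:ℝ):EReal))
        + b * (P.G x ((z₁:ℝ):EReal) - P.G x ((z₂:ℝ):EReal))) ∂p
        = (P.Fp p ((z₁:ℝ):EReal) - P.Fp p ((z₂:ℝ):EReal))
            + b * (P.Gp p ((z₁:ℝ):EReal) - P.Gp p ((z₂:ℝ):EReal)) := by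
      rw [integral_add hA hB, integral_sub (P.F_int_p hp _) (P.F_int_p hp _),
        integral_const_mul, integral_sub (P.G_int_p hp _) (P.G_int_p hp _)]
      rfl
    have h3 : ∫⁻ x, ENNReal.ofReal ((P.F x ((z₁:ℝ):EReal) - P.F x ((z₂:ℝ):EReal))
            + b * (P.G x ((z₁:ℝ):EReal) - P.G x ((z₂:ℝ):EReal))) ∂p
        = ENNReal.ofReal ((P.Fp p ((z₁:ℝ):EReal) - P.Fp p ((z₂:ℝ):EReal))
            + b * (P.Gp p ((z₁:ℝ):EReal) - P.Gp p ((z₂:ℝ):EReal))) := by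
      rw [← ofReal_integral_eq_lintegral_ofReal hφint
        (Filter.Eventually.of_forall fun x => hphinn x), heq]
    rw [h1, h2, h3, ENNReal.toReal_ofReal]
    have h5 : 0 ≤ ∫ x, ((P.F x ((z₁:ℝ):EReal) - P.F x ((z₂:ℝ):EReal))
        + b * (P.G x ((z₁:ℝ):EReal) - P.G x ((z₂:ℝ):EReal))) ∂p :=
      integral_nonneg hphinn
    rw [← heq]
    exact h5
  have := hsplit
  rw [hνGI] at this
  linarith [hchain, this]

end Bandit

end AuxProof6

/-- Under PCL-indexability, the Lebesgue–Stieltjes signed measure of `F(p,·)`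
is absolutely continuous with respect to that of `G(p,·)`, with the MP index
`m*` as a Radon–Nikodým derivative. -/
theorem mpIndex_radonNikodym (P : Bandit) (h : P.PCLIndexable)
    (p : Measure ℝ) (hp : P.IsInitDist p)
    (νG : Measure ℝ) (hνG : IsLSMeasureOfAnti (fun z : ℝ => P.Gp p z) νG)
    (νF : MeasureTheory.SignedMeasure ℝ)
    (hνF : ∀ z₁ z₂ : ℝ, z₁ ≤ z₂ →
      νF (Set.Ioc z₁ z₂) = P.Fp p z₁ - P.Fp p z₂) :
    (∀ S : Set ℝ, MeasurableSet S → νG S = 0 → νF S = 0) ∧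
    (∀ S : Set ℝ, MeasurableSet S → νF S = ∫ z in S, P.mStar z ∂νG) := by
  have hPCL := h
  obtain ⟨hg, hPC2, hPC3⟩ := h
  obtain ⟨hm_mono, hm_cont, hm_bdd⟩ := hPC2
  obtain ⟨b₀, hb₀mem⟩ := hm_bdd
  have hb₀ : ∀ z, b₀ ≤ P.mStar z := fun z => hb₀mem (Set.mem_range_self z)
  set ψ : ℝ → ℝ := fun z => P.mStar z - b₀ with hψ
  have hψcont : Continuous ψ := hm_cont.sub continuous_const
  have hψnn : ∀ z, 0 ≤ ψ z := fun z => sub_nonneg.2 (hb₀ z)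
  -- the exhaustion
  set In : ℕ → Set ℝ := fun n => Set.Ioc (-(n:ℝ)-1) ((n:ℝ)+1) with hIn
  have hInlt : ∀ n : ℕ, (-(n:ℝ)-1) < ((n:ℝ)+1) := fun n => by
    have : (0:ℝ) ≤ (n:ℝ) := Nat.cast_nonneg n
    linarith
  have hInmono : Monotone In := fun a b hab => by
    have : (a:ℝ) ≤ (b:ℝ) := Nat.cast_le.2 hab
    exact Set.Ioc_subset_Ioc (by linarith) (by linarith)
  have hIncover : (⋃ n, In n) = Set.univ := by
    ext x
    simp only [Set.mem_iUnion, Set.mem_univ, iff_true]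
    obtain ⟨n, hn⟩ := exists_nat_ge |x|
    have h1 := abs_le.1 hn
    exact ⟨n, by constructor <;> [linarith [h1.1]; linarith [h1.2]]⟩
  -- νG is a finite measure
  haveI hνGfin : IsFiniteMeasure νG := by
    constructor
    rw [← hIncover, (hInmono.directed_le).measure_iUnion]
    refine lt_of_le_of_lt (iSup_le fun n => ?_)
      (ENNReal.ofReal_lt_top : ENNReal.ofReal (P.Gp p ⊥ - P.Gp p ⊤) < ⊤)
    rw [hIn]
    rw [hνG _ _ (hInlt n).le]
    apply ENNReal.ofReal_le_ofReal
    have h1 := P.Gp_anti hg hp (bot_le : (⊥:EReal) ≤ (((-(n:ℝ)-1 : ℝ)):EReal))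
    have h2 := P.Gp_anti hg hp (le_top : ((((n:ℝ)+1 : ℝ)):EReal) ≤ ⊤)
    linarith
  -- Jordan decomposition of νF
  set jp := νF.toJordanDecomposition.posPart with hjp
  set jn := νF.toJordanDecomposition.negPart with hjn
  have hνFapply : ∀ S : Set ℝ, MeasurableSet S → νF S = (jp S).toReal - (jn S).toReal := by
    intro S hS
    conv_lhs => rw [← νF.toSignedMeasure_toJordanDecomposition]
    show (νF.toJordanDecomposition.toSignedMeasure) S = _
    rw [JordanDecomposition.toSignedMeasure, VectorMeasure.sub_apply,
      Measure.toSignedMeasure_apply_measurable hS, Measure.toSignedMeasure_apply_measurable hS]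
    rfl
  set K := (jp Set.univ).toReal + (jn Set.univ).toReal with hK
  have hνFbd : ∀ S : Set ℝ, MeasurableSet S → |νF S| ≤ K := by
    intro S hS
    rw [hνFapply S hS]
    have h1 : (jp S).toReal ≤ (jp Set.univ).toReal :=
      ENNReal.toReal_mono (measure_ne_top _ _) (measure_mono (Set.subset_univ S))
    have h2 : (jn S).toReal ≤ (jn Set.univ).toReal :=
      ENNReal.toReal_mono (measure_ne_top _ _) (measure_mono (Set.subset_univ S))
    have h3 : 0 ≤ (jp S).toReal := ENNReal.toReal_nonneg
    have h4 : 0 ≤ (jn S).toReal := ENNReal.toReal_nonneg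
    rw [abs_le]
    constructor
    · simp only [hK]; linarith
    · simp only [hK]; linarith
  -- finiteness of the ψ-lintegral
  have hbound : ∀ n : ℕ, ∫⁻ z in In n, ENNReal.ofReal (ψ z) ∂νG
      ≤ ENNReal.ofReal (K + |b₀| * (νG Set.univ).toReal) := by
    intro n
    have hik := P.interval_key hPCL hp hνG _ _ (hInlt n)
    have hint1 : IntegrableOn P.mStar (In n) νG := hm_cont.integrableOn_Ioc
    have hint2 : IntegrableOn ψ (In n) νG := hψcont.integrableOn_Ioc
    have e1 : ∫ z in In n, ψ z ∂νG
        = (∫ z in In n, P.mStar z ∂νG) - b₀ * (νG (In n)).toReal := by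
      show ∫ z in In n, (P.mStar z - b₀) ∂νG = _
      rw [integral_sub hint1 (integrableOn_const (measure_lt_top _ _).ne),
        setIntegral_const, measureReal_def]
      simp only [smul_eq_mul]
      ring
    rw [← ofReal_integral_eq_lintegral_ofReal hint2
      (Filter.Eventually.of_forall fun z => hψnn z)]
    apply ENNReal.ofReal_le_ofReal
    rw [e1]
    have hikν : ∫ z in In n, P.mStar z ∂νG = νF (In n) := by
      rw [hik, ← hνF _ _ (hInlt n).le]
    rw [hikν]
    have h2 := hνFbd (In n) measurableSet_Ioc
    have h3 : |b₀ * (νG (In n)).toReal| ≤ |b₀| * (νG Set.univ).toReal := by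
      rw [abs_mul]
      have : |(νG (In n)).toReal| = (νG (In n)).toReal := abs_of_nonneg ENNReal.toReal_nonneg
      rw [this]
      exact mul_le_mul_of_nonneg_left
        (ENNReal.toReal_mono (measure_ne_top _ _) (measure_mono (Set.subset_univ _)))
        (abs_nonneg b₀)
    have h4 := abs_le.1 h2
    have h5 := abs_le.1 h3
    linarith [h4.2, h5.1]
  have hlim : ∫⁻ z, ENNReal.ofReal (ψ z) ∂νG < ⊤ := by
    have hindeq : ∀ n, ∫⁻ z in In n, ENNReal.ofReal (ψ z) ∂νG
        = ∫⁻ z, (In n).indicator (fun z => ENNReal.ofReal (ψ z)) z ∂νG :=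
      fun n => (lintegral_indicator measurableSet_Ioc _).symm
    have hsup : ∫⁻ z, ENNReal.ofReal (ψ z) ∂νG
        = ⨆ n, ∫⁻ z in In n, ENNReal.ofReal (ψ z) ∂νG := by
      simp_rw [hindeq]
      rw [← lintegral_iSup]
      · congr 1
        funext z
        have hz : z ∈ ⋃ n, In n := by rw [hIncover]; trivial
        obtain ⟨n, hn⟩ := Set.mem_iUnion.1 hz
        refine le_antisymm (le_iSup_of_le n (le_of_eq (Set.indicator_of_mem hn (fun z => ENNReal.ofReal (ψ z))).symm)) ?_
        refine iSup_le fun m => ?_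
        by_cases hm : z ∈ In m
        · rw [Set.indicator_of_mem hm]
        · rw [Set.indicator_of_notMem hm]
          exact by simp
      · exact fun n => (hψcont.measurable.ennreal_ofReal).indicator measurableSet_Ioc
      · intro a b hab
        exact fun z => Set.indicator_le_indicator_of_subset (hInmono hab) (fun _ => by simp) z
    rw [hsup]
    exact lt_of_le_of_lt (iSup_le hbound) ENNReal.ofReal_lt_top
  have hψint : Integrable ψ νG :=
    ⟨hψcont.aestronglyMeasurable,
      (hasFiniteIntegral_iff_ofReal (Filter.Eventually.of_forall hψnn)).2 hlim⟩
  -- the density measure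
  set μψ := νG.withDensity (fun z => ENNReal.ofReal (ψ z)) with hμψdef
  haveI hμψfin : IsFiniteMeasure μψ := by
    constructor
    rw [hμψdef, withDensity_apply _ MeasurableSet.univ, Measure.restrict_univ]
    exact hlim
  have hμψ_apply : ∀ S : Set ℝ, MeasurableSet S → (μψ S).toReal = ∫ z in S, ψ z ∂νG := by
    intro S hS
    rw [hμψdef, withDensity_apply _ hS]
    rw [integral_eq_lintegral_of_nonneg_ae
      (Filter.Eventually.of_forall fun z => hψnn z) hψcont.aestronglyMeasurable.restrict]
  have hsetm : ∀ S : Set ℝ, MeasurableSet S →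
      ∫ z in S, P.mStar z ∂νG = (μψ S).toReal + b₀ * (νG S).toReal := by
    intro S hS
    have e0 : ∫ z in S, P.mStar z ∂νG = ∫ z in S, (ψ z + b₀) ∂νG := by
      congr 1
      funext z
      simp [hψ]
    rw [e0, integral_add hψint.integrableOn
      (integrableOn_const (measure_lt_top _ _).ne), setIntegral_const, measureReal_def,
      hμψ_apply S hS]
    simp only [smul_eq_mul]
    ring
  -- the two finite measures
  set cp := ENNReal.ofReal b₀ with hcp
  set cm := ENNReal.ofReal (-b₀) with hcm
  have hcpcm : ∀ (t : ENNReal), t ≠ ⊤ → (cp * t).toReal - (cm * t).toReal = b₀ * t.toReal := by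
    intro t ht
    rcases le_or_gt 0 b₀ with hb | hb
    · have : cm = 0 := by simp [hcm, ENNReal.ofReal_eq_zero.2 (neg_nonpos.2 hb)]
      rw [this]
      simp [hcp, ENNReal.toReal_mul, ENNReal.toReal_ofReal hb]
    · have : cp = 0 := by simp [hcp, ENNReal.ofReal_eq_zero.2 hb.le]
      rw [this]
      simp [hcm, ENNReal.toReal_mul, ENNReal.toReal_ofReal (neg_nonneg.2 hb.le)]
      try ring
  set μL := jp + cm • νG with hμL
  set μR := (jn + μψ) + cp • νG with hμR
  have hLfin : ∀ S : Set ℝ, μL S ≠ ⊤ := by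
    intro S
    rw [hμL]
    simp only [Measure.add_apply, Measure.smul_apply, smul_eq_mul]
    exact ENNReal.add_ne_top.2 ⟨measure_ne_top _ _,
      ENNReal.mul_ne_top ENNReal.ofReal_ne_top (measure_ne_top _ _)⟩
  have hRfin : ∀ S : Set ℝ, μR S ≠ ⊤ := by
    intro S
    rw [hμR]
    simp only [Measure.add_apply, Measure.smul_apply, smul_eq_mul]
    exact ENNReal.add_ne_top.2 ⟨ENNReal.add_ne_top.2 ⟨measure_ne_top _ _, measure_ne_top _ _⟩,
      ENNReal.mul_ne_top ENNReal.ofReal_ne_top (measure_ne_top _ _)⟩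
  have hLtoReal : ∀ S : Set ℝ, (μL S).toReal = (jp S).toReal + (cm * νG S).toReal := by
    intro S
    rw [hμL]
    simp only [Measure.add_apply, Measure.smul_apply, smul_eq_mul]
    rw [ENNReal.toReal_add (measure_ne_top _ _)
      (ENNReal.mul_ne_top ENNReal.ofReal_ne_top (measure_ne_top _ _))]
  have hRtoReal : ∀ S : Set ℝ, (μR S).toReal
      = (jn S).toReal + (μψ S).toReal + (cp * νG S).toReal := by
    intro S
    rw [hμR]
    simp only [Measure.add_apply, Measure.smul_apply, smul_eq_mul]
    rw [ENNReal.toReal_add (ENNReal.add_ne_top.2 ⟨measure_ne_top _ _, measure_ne_top _ _⟩)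
      (ENNReal.mul_ne_top ENNReal.ofReal_ne_top (measure_ne_top _ _)),
      ENNReal.toReal_add (measure_ne_top _ _) (measure_ne_top _ _)]
  haveI : IsFiniteMeasure μL := ⟨lt_top_iff_ne_top.2 (hLfin _)⟩
  have hLR : μL = μR := by
    refine Measure.ext_of_Ioc μL μR ?_
    intro a b hab
    have hik := P.interval_key hPCL hp hνG a b hab
    have h1 := hνFapply _ (measurableSet_Ioc (a := a) (b := b))
    have h2 := hsetm _ (measurableSet_Ioc (a := a) (b := b))
    have h3 := hνF a b hab.le
    have h4 := hcpcm (νG (Set.Ioc a b)) (measure_ne_top _ _)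
    rw [← ENNReal.toReal_eq_toReal_iff' (hLfin _) (hRfin _), hLtoReal, hRtoReal]
    linarith
  have main : ∀ S : Set ℝ, MeasurableSet S → νF S = ∫ z in S, P.mStar z ∂νG := by
    intro S hS
    have hLRS : (μL S).toReal = (μR S).toReal := by rw [hLR]
    rw [hLtoReal, hRtoReal] at hLRS
    have h4 := hcpcm (νG S) (measure_ne_top _ _)
    rw [hνFapply S hS, hsetm S hS]
    linarith
  refine ⟨?_, main⟩
  intro S hS h0
  rw [main S hS]
  have hres : νG.restrict S = 0 := Measure.restrict_eq_zero.2 h0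
  show ∫ z, P.mStar z ∂(νG.restrict S) = 0
  rw [hres, integral_zero_measure]
end
end
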